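/- arXiv:1311.4115 — 3 statements merged into one kernel-verified Lean document; each statement's English description precedes it below -/
import Mathlib

section
/- Let a_n, b_n ≥ 0 be sequences with a_n, b_n = n^{o(1/log log n)} (i.e. log(max(a_n, b_n, 2)) · log log n / log n → 0) and such that s_n²/d_n → ∞, where d_n = (a_n+b_n)/2 and s_n = (a_n−b_n)/2. Then one can a.a.s. recover the planted bisection up to an error of o(n) vertices: there exist functions τ_n from graphs on {1,…,n} to {+1,−1}^n such that if (σ, G) is drawn from 𝔾(n, a_n/n, b_n/n) then (1/n) |∑_{v=1}^n σ_v (τ_n(G))_v| → 1 in probability as n → ∞. -/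
open Filter Finset
open scoped Classical

noncomputable section

/-! ### The sample space of the stochastic block model -/

/-- Potential-edge index: ordered pairs `(u,v)` of vertices with `u < v`. -/
def EdgeIdx (n : ℕ) : Type := {p : Fin n × Fin n // p.1 < p.2}

instance (n : ℕ) : Fintype (EdgeIdx n) := by unfold EdgeIdx; infer_instance
instance (n : ℕ) : DecidableEq (EdgeIdx n) := by unfold EdgeIdx; infer_instance

/-- A graph on vertex set `Fin n`, given by the indicator of each potential edge. -/
def SGraph (n : ℕ) : Type := EdgeIdx n → Bool

instance (n : ℕ) : Fintype (SGraph n) := by unfold SGraph; infer_instance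
instance (n : ℕ) : DecidableEq (SGraph n) := by unfold SGraph; infer_instance

/-- Adjacency in a graph. -/
def adj {n : ℕ} (G : SGraph n) (u v : Fin n) : Bool :=
  if h : u < v then G ⟨(u, v), h⟩ else if h' : v < u then G ⟨(v, u), h'⟩ else false

/-- The ±1 value of a Boolean label. -/
def sgn (b : Bool) : ℝ := if b then 1 else -1

/-- Sample space of the block model: a labelling together with a graph. -/
def SampleSpace (n : ℕ) : Type := (Fin n → Bool) × SGraph n

instance (n : ℕ) : Fintype (SampleSpace n) := by unfold SampleSpace; infer_instance

/-- The probability mass of an outcome `ω` under the stochastic block model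
`𝔾(n, a/n, b/n)`: labels are uniform, and conditionally on the labels each
potential edge appears independently with probability `a/n` (equal labels)
or `b/n` (unequal labels). -/
def bmass (a b : ℝ) (n : ℕ) (ω : SampleSpace n) : ℝ :=
  (1 / 2) ^ n *
    ∏ e : EdgeIdx n,
      (if ω.2 e then (if ω.1 e.1.1 = ω.1 e.1.2 then a / n else b / n)
       else 1 - (if ω.1 e.1.1 = ω.1 e.1.2 then a / n else b / n))

/-- Probability of an event under the block model. -/
def bPr (a b : ℝ) (n : ℕ) (A : Set (SampleSpace n)) : ℝ :=
  ∑ ω : SampleSpace n, if ω ∈ A then bmass a b n ω else 0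

/-- Conditional expectation of `f` given the event `A`, under the block model. -/
def bCondE (a b : ℝ) (n : ℕ) (f : SampleSpace n → ℝ) (A : Set (SampleSpace n)) : ℝ :=
  (∑ ω : SampleSpace n, if ω ∈ A then bmass a b n ω * f ω else 0) / bPr a b n A

/-- Conditional probability of `B` given `A`, under the block model. -/
def bCondPr (a b : ℝ) (n : ℕ) (B A : Set (SampleSpace n)) : ℝ :=
  bPr a b n (B ∩ A) / bPr a b n A

/-- The event that the labelling agrees with `τ` on the set `U`. -/
def labelEvent {n : ℕ} (U : Finset (Fin n)) (τ : Fin n → Bool) : Set (SampleSpace n) :=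
  {ω | ∀ x ∈ U, ω.1 x = τ x}

/-- Mass of a graph under the block model conditioned on the full labelling `τ`. -/
def cmass {n : ℕ} (a b : ℝ) (τ : Fin n → Bool) (G : SGraph n) : ℝ :=
  ∏ e : EdgeIdx n,
    (if G e then (if τ e.1.1 = τ e.1.2 then a / n else b / n)
     else 1 - (if τ e.1.1 = τ e.1.2 then a / n else b / n))

/-- Expectation over the graph in the block model conditioned on the labelling `τ`. -/
def cE {n : ℕ} (a b : ℝ) (τ : Fin n → Bool) (f : SGraph n → ℝ) : ℝ :=
  ∑ G : SGraph n, cmass a b τ G * f G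

/-- Mass of a graph with independent edges, where the pair `{x,y}` is an edge with
probability `(d + τ_x τ_y s)/n`. -/
def lmass {n : ℕ} (s d : ℝ) (τ : Fin n → Bool) (G : SGraph n) : ℝ :=
  ∏ e : EdgeIdx n,
    (if G e then (d + sgn (τ e.1.1) * sgn (τ e.1.2) * s) / n
     else 1 - (d + sgn (τ e.1.1) * sgn (τ e.1.2) * s) / n)

/-- Expectation for the random graph with edge probabilities `(d + τ_x τ_y s)/n`. -/
def lE {n : ℕ} (s d : ℝ) (τ : Fin n → Bool) (f : SGraph n → ℝ) : ℝ :=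
  ∑ G : SGraph n, lmass s d τ G * f G

/-! ### Paths -/

/-- The `i`-th vertex of a path encoded as `γ : Fin (k+1) → β` (index clamped to `k`). -/
def pget {β : Type*} {k : ℕ} (γ : Fin (k + 1) → β) (i : ℕ) : β :=
  γ ⟨min i k, by omega⟩

/-- A path of length `k`: consecutive vertices are distinct. -/
def IsPath {n : ℕ} (k : ℕ) (γ : Fin (k + 1) → Fin n) : Prop :=
  ∀ i < k, pget γ i ≠ pget γ (i + 1)

/-- A non-backtracking path of length `k`. -/
def IsNB {n : ℕ} (k : ℕ) (γ : Fin (k + 1) → Fin n) : Prop :=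
  IsPath k γ ∧ ∀ i, i + 2 ≤ k → pget γ i ≠ pget γ (i + 2)

/-- A self-avoiding path of length `k`: all vertices distinct. -/
def IsSAW {n : ℕ} (k : ℕ) (γ : Fin (k + 1) → Fin n) : Prop :=
  IsPath k γ ∧ ∀ i ≤ k, ∀ j ≤ k, pget γ i = pget γ j → i = j

/-- The edge weight `W_e = 1_{e ∈ E(G)} - d/n`. -/
def W {n : ℕ} (d : ℝ) (G : SGraph n) (u v : Fin n) : ℝ :=
  (if adj G u v then 1 else 0) - d / n

/-- The weight `X_γ = ∏ W_{{γ(i-1), γ(i)}}` of a path `γ` of length `k`. -/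
def Xweight {n : ℕ} (d : ℝ) (G : SGraph n) (k : ℕ) (γ : Fin (k + 1) → Fin n) : ℝ :=
  ∏ i ∈ Finset.range k, W d G (pget γ i) (pget γ (i + 1))

/-- `Y_{u,v}`: the total weight of self-avoiding paths of length `k` from `u` to `v`. -/
def Ysaw {n : ℕ} (d : ℝ) (G : SGraph n) (k : ℕ) (u v : Fin n) : ℝ :=
  ∑ γ : Fin (k + 1) → Fin n,
    if IsSAW k γ ∧ pget γ 0 = u ∧ pget γ k = v then Xweight d G k γ else 0

/-- `N^{(k)}_{u,v}`: the total weight of non-backtracking paths of length `k` from `u` to `v`. -/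
def Nnb {n : ℕ} (d : ℝ) (G : SGraph n) (k : ℕ) (u v : Fin n) : ℝ :=
  ∑ γ : Fin (k + 1) → Fin n,
    if IsNB k γ ∧ pget γ 0 = u ∧ pget γ k = v then Xweight d G k γ else 0

/-! ### New, old, returning edges -/

/-- Edge `i` of `γ` (from `γ i` to `γ (i+1)`) is *new* if its head has not been
visited before. -/
def isNewEdge {n k : ℕ} (γ : Fin (k + 1) → Fin n) (i : ℕ) : Prop :=
  ∀ j ≤ i, pget γ j ≠ pget γ (i + 1)

/-- Edge `i` of `γ` is *old* if it coincides (as an unordered pair) with an earlier edge. -/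
def isOldEdge {n k : ℕ} (γ : Fin (k + 1) → Fin n) (i : ℕ) : Prop :=
  ∃ j < i, s(pget γ j, pget γ (j + 1)) = s(pget γ i, pget γ (i + 1))

/-- The number of new edges of a path. -/
def kNew {n k : ℕ} (γ : Fin (k + 1) → Fin n) : ℕ :=
  ((Finset.range k).filter fun i => isNewEdge γ i).card

/-- The number of returning edges of a path (neither new nor old). -/
def kRet {n k : ℕ} (γ : Fin (k + 1) → Fin n) : ℕ :=
  ((Finset.range k).filter fun i => ¬ isNewEdge γ i ∧ ¬ isOldEdge γ i).card

/-- Edge `i` of `γ₂` is *new with respect to `γ₁`* if its head is not a vertex of `γ₁`. -/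
def isNewWrt {n k : ℕ} (γ₁ γ₂ : Fin (k + 1) → Fin n) (i : ℕ) : Prop :=
  ∀ j ≤ k, pget γ₁ j ≠ pget γ₂ (i + 1)

/-- Edge `i` of `γ₂` is *old with respect to `γ₁`* if it appears (as an unordered
pair) among the edges of `γ₁`. -/
def isOldWrt {n k : ℕ} (γ₁ γ₂ : Fin (k + 1) → Fin n) (i : ℕ) : Prop :=
  ∃ j < k, s(pget γ₁ j, pget γ₁ (j + 1)) = s(pget γ₂ i, pget γ₂ (i + 1))

/-- The number of edges of `γ₂` that are new with respect to `γ₁`. -/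
def kNewWrt {n k : ℕ} (γ₁ γ₂ : Fin (k + 1) → Fin n) : ℕ :=
  ((Finset.range k).filter fun i => isNewWrt γ₁ γ₂ i).card

/-- The number of edges of `γ₂` that are returning with respect to `γ₁`. -/
def kRetWrt {n k : ℕ} (γ₁ γ₂ : Fin (k + 1) → Fin n) : ℕ :=
  ((Finset.range k).filter fun i => ¬ isNewWrt γ₁ γ₂ i ∧ ¬ isOldWrt γ₁ γ₂ i).card

/-! ### Multigraphs, tangles -/

/-- The support simple graph of a multigraph given by multiplicities `m`. -/
def msupp {n : ℕ} (m : Sym2 (Fin n) → ℕ) : SimpleGraph (Fin n) where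
  Adj x y := x ≠ y ∧ 0 < m s(x, y)
  symm := by
    constructor
    intro x y h
    exact ⟨h.1.symm, by rw [Sym2.eq_swap]; exact h.2⟩
  loopless := by constructor; intro x h; exact h.1 rfl

/-- The ball of radius `ℓ` around `v` in the multigraph `m`. -/
def mball {n : ℕ} (m : Sym2 (Fin n) → ℕ) (ℓ : ℕ) (v : Fin n) : Set (Fin n) :=
  {u | ∃ p : (msupp m).Walk v u, p.length ≤ ℓ}

/-- The number of edges (with multiplicity) of the multigraph `m` with both
endpoints in `S`. -/
def edgeCountIn {n : ℕ} (m : Sym2 (Fin n) → ℕ) (S : Set (Fin n)) : ℕ :=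
  ∑ e : Sym2 (Fin n), if ¬ e.IsDiag ∧ ∀ x ∈ e, x ∈ S then m e else 0

/-- A multigraph is `ℓ`-tangle-free if every neighbourhood of radius `ℓ` contains at
most one cycle, i.e. the number of edges (with multiplicity) inside every radius-`ℓ`
ball is at most the number of its vertices. -/
def MTangleFree {n : ℕ} (ℓ : ℕ) (m : Sym2 (Fin n) → ℕ) : Prop :=
  ∀ v : Fin n, edgeCountIn m (mball m ℓ v) ≤ (mball m ℓ v).ncard

/-- The multiplicity with which the path `γ` traverses each unordered edge. -/
def pmul {n k : ℕ} (γ : Fin (k + 1) → Fin n) : Sym2 (Fin n) → ℕ := fun e =>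
  ((Finset.range k).filter fun i => e = s(pget γ i, pget γ (i + 1))).card

/-- The number `t(γ)` of `ℓ`-tangles of a path `γ`: the minimal number of edges
(counted with multiplicity) whose deletion from the multigraph of `γ` leaves an
`ℓ`-tangle-free multigraph. -/
def tTangles {n k : ℕ} (ℓ : ℕ) (γ : Fin (k + 1) → Fin n) : ℕ :=
  sInf {t | ∃ c : Sym2 (Fin n) → ℕ, (∀ e, c e ≤ pmul γ e) ∧
      (∑ e : Sym2 (Fin n), c e) = t ∧ MTangleFree ℓ (fun e => pmul γ e - c e)}

/-- The multiplicity function (0/1) of the edges of a graph `G : SGraph n`. -/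
def gmult {n : ℕ} (G : SGraph n) : Sym2 (Fin n) → ℕ := fun e =>
  if ∃ x y : Fin n, adj G x y = true ∧ e = s(x, y) then 1 else 0

/-! ### SAW decompositions -/

/-- The set of (unordered) edges of a path. -/
def pathEdges {n k : ℕ} (γ : Fin (k + 1) → Fin n) : Set (Sym2 (Fin n)) :=
  {e | ∃ i < k, e = s(pget γ i, pget γ (i + 1))}

/-- The degree of a vertex in the graph `(V(γ), E(γ))` of a path. -/
def pathDeg {n k : ℕ} (γ : Fin (k + 1) → Fin n) (w : Fin n) : ℕ :=
  Set.ncard {x : Fin n | s(w, x) ∈ pathEdges γ}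

/-- `γ` backtracks at `w`. -/
def backtrackAt {n k : ℕ} (γ : Fin (k + 1) → Fin n) (w : Fin n) : Prop :=
  ∃ i, 0 < i ∧ i < k ∧ pget γ (i - 1) = pget γ (i + 1) ∧ pget γ i = w

/-- The number of backtracks of `γ`. -/
def numBacktracks {n k : ℕ} (γ : Fin (k + 1) → Fin n) : ℕ :=
  ((Finset.range k).filter fun i => 0 < i ∧ pget γ (i - 1) = pget γ (i + 1)).card

/-- The endpoint set `V_end` of the canonical SAW-decomposition: vertices of degree
at least 3, the two endpoints of `γ`, and the backtrack points of `γ`. -/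
def VEnd {n k : ℕ} (γ : Fin (k + 1) → Fin n) : Set (Fin n) :=
  {w | 3 ≤ pathDeg γ w} ∪ {pget γ 0, pget γ k} ∪ {w | backtrackAt γ w}

/-- The edges of the segment of `γ` between positions `j` and `j'`. -/
def segEdges {n k : ℕ} (γ : Fin (k + 1) → Fin n) (j j' : ℕ) : Set (Sym2 (Fin n)) :=
  {e | ∃ i, j ≤ i ∧ i < j' ∧ e = s(pget γ i, pget γ (i + 1))}

/-- `(j, j')` are two consecutive visit times of `γ` to the set `VE`. -/
def IsSegPair {n k : ℕ} (γ : Fin (k + 1) → Fin n) (VE : Set (Fin n)) (j j' : ℕ) : Prop :=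
  j < j' ∧ j' ≤ k ∧ pget γ j ∈ VE ∧ pget γ j' ∈ VE ∧
    ∀ i, j < i → i < j' → pget γ i ∉ VE

/-- The number of distinct segments in the SAW-decomposition of `γ` with endpoint
set `VE` (segments identified by their edge sets). -/
def numSegs {n k : ℕ} (γ : Fin (k + 1) → Fin n) (VE : Set (Fin n)) : ℕ :=
  Set.ncard {E : Set (Sym2 (Fin n)) | ∃ j j', IsSegPair γ VE j j' ∧ E = segEdges γ j j'}

/-- The edge set `E(Z^short(γ))` of the segments of the canonical SAW-decomposition
of `γ` of length at most `4ℓ`. -/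
def EZshort {n k : ℕ} (ℓ : ℕ) (γ : Fin (k + 1) → Fin n) : Set (Sym2 (Fin n)) :=
  {e | ∃ j j', IsSegPair γ (VEnd γ) j j' ∧ j' - j ≤ 4 * ℓ ∧ e ∈ segEdges γ j j'}

/-- The family `𝓕(γ)` of sets of short-segment edges. -/
def FFam {n k : ℕ} (ℓ : ℕ) (γ : Fin (k + 1) → Fin n) : Set (Finset (Sym2 (Fin n))) :=
  {F | ↑F ⊆ EZshort ℓ γ ∧ tTangles ℓ γ ≤ ∑ e ∈ F, pmul γ e ∧ F.card ≤ kRet γ - 1}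

end

/-! ### Auxiliary development for the proof -/

noncomputable section AuxProof

namespace BlockAux

variable {n : ℕ}

lemma sgn_mul_self (c : Bool) : sgn c * sgn c = 1 := by cases c <;> simp [sgn]

lemma sgn_cases (c : Bool) : sgn c = 1 ∨ sgn c = -1 := by cases c <;> simp [sgn]

lemma abs_sgn (c : Bool) : |sgn c| = 1 := by cases c <;> simp [sgn]

/-- The sign product of a labelling over an edge. -/
def chi (τ : Fin n → Bool) (e : EdgeIdx n) : ℝ := sgn (τ e.1.1) * sgn (τ e.1.2)

lemma chi_cases (τ : Fin n → Bool) (e : EdgeIdx n) : chi τ e = 1 ∨ chi τ e = -1 := by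
  unfold chi
  rcases sgn_cases (τ e.1.1) with h1 | h1 <;> rcases sgn_cases (τ e.1.2) with h2 | h2 <;>
    rw [h1, h2] <;> norm_num

lemma chi_mul_self (τ : Fin n → Bool) (e : EdgeIdx n) : chi τ e * chi τ e = 1 := by
  rcases chi_cases τ e with h | h <;> rw [h] <;> norm_num

lemma abs_chi (τ : Fin n → Bool) (e : EdgeIdx n) : |chi τ e| ≤ 1 := by
  rcases chi_cases τ e with h | h <;> rw [h] <;> norm_num

/-- Per-edge probability given the labels. -/
def prE (a b : ℝ) (n : ℕ) (σ : Fin n → Bool) (e : EdgeIdx n) : ℝ :=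
  if σ e.1.1 = σ e.1.2 then a / n else b / n

lemma cmass_eq (a b : ℝ) (σ : Fin n → Bool) (G : SGraph n) :
    cmass a b σ G
      = ∏ e : EdgeIdx n, (if G e then prE a b n σ e else 1 - prE a b n σ e) := rfl

lemma prE_nonneg {a b : ℝ} (ha : 0 ≤ a) (hb : 0 ≤ b) (σ : Fin n → Bool) (e : EdgeIdx n) :
    0 ≤ prE a b n σ e := by
  unfold prE; split <;> positivity

lemma prE_le_one {a b : ℝ} (han : a ≤ n) (hbn : b ≤ n) (hn : 0 < n)
    (σ : Fin n → Bool) (e : EdgeIdx n) : prE a b n σ e ≤ 1 := by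
  have hn' : (0:ℝ) < n := by exact_mod_cast hn
  unfold prE; split <;> rw [div_le_one hn'] <;> assumption

lemma cmass_nonneg {a b : ℝ} (ha : 0 ≤ a) (hb : 0 ≤ b) (han : a ≤ n) (hbn : b ≤ n)
    (hn : 0 < n) (σ : Fin n → Bool) (G : SGraph n) : 0 ≤ cmass a b σ G := by
  rw [cmass_eq]
  refine Finset.prod_nonneg fun e _ => ?_
  split
  · exact prE_nonneg ha hb σ e
  · linarith [prE_le_one han hbn hn σ e]

lemma bmass_nonneg {a b : ℝ} (ha : 0 ≤ a) (hb : 0 ≤ b) (han : a ≤ n) (hbn : b ≤ n)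
    (hn : 0 < n) (ω : SampleSpace n) : 0 ≤ bmass a b n ω := by
  have : bmass a b n ω = (1/2:ℝ)^n * cmass a b ω.1 ω.2 := rfl
  rw [this]
  have := cmass_nonneg ha hb han hbn hn ω.1 ω.2
  positivity

/-- Summing a product of per-edge functions over all graphs factorizes. -/
lemma sum_graph (f : EdgeIdx n → Bool → ℝ) :
    ∑ G : SGraph n, ∏ e : EdgeIdx n, f e (G e)
      = ∏ e : EdgeIdx n, (f e true + f e false) := by
  calc ∑ G : SGraph n, ∏ e : EdgeIdx n, f e (G e)
      = ∑ G ∈ Fintype.piFinset (fun _ : EdgeIdx n => (Finset.univ : Finset Bool)),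
          ∏ e : EdgeIdx n, f e (G e) := by rw [Fintype.piFinset_univ]; rfl
    _ = ∏ e : EdgeIdx n, ∑ c : Bool, f e c := (Finset.prod_univ_sum _ f).symm
    _ = ∏ e : EdgeIdx n, (f e true + f e false) := by
        exact Finset.prod_congr rfl fun e _ => by rw [Fintype.sum_bool]

lemma cmass_sum_one (a b : ℝ) (σ : Fin n → Bool) :
    ∑ G : SGraph n, cmass a b σ G = 1 := by
  rw [Finset.sum_congr rfl fun G _ => cmass_eq a b σ G,
    sum_graph (fun e c => if c then prE a b n σ e else 1 - prE a b n σ e)]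
  simp

lemma bmass_total (a b : ℝ) : ∑ ω : SampleSpace n, bmass a b n ω = 1 := by
  have h0 : (∑ ω : SampleSpace n, bmass a b n ω)
      = ∑ p : (Fin n → Bool) × SGraph n, bmass a b n p := rfl
  refine h0.trans ((Fintype.sum_prod_type _).trans ?_)
  have h1 : ∀ σ : Fin n → Bool, ∑ G : SGraph n, bmass a b n (σ, G) = (1/2:ℝ)^n := by
    intro σ
    have h2 : ∀ G : SGraph n, bmass a b n (σ, G) = (1/2:ℝ)^n * cmass a b σ G := fun G => rfl
    rw [Finset.sum_congr rfl fun G _ => h2 G, ← Finset.mul_sum, cmass_sum_one, mul_one]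
  rw [Finset.sum_congr rfl fun σ _ => h1 σ, Finset.sum_const, Finset.card_univ,
    Fintype.card_fun, Fintype.card_bool, Fintype.card_fin, nsmul_eq_mul]
  push_cast
  rw [← mul_pow]
  norm_num

lemma bPr_add_compl (a b : ℝ) (A : Set (SampleSpace n)) :
    bPr a b n A + bPr a b n Aᶜ = 1 := by
  unfold bPr
  rw [← Finset.sum_add_distrib]
  rw [← bmass_total (n := n) a b]
  exact Finset.sum_congr rfl fun ω _ => by by_cases h : ω ∈ A <;> simp [h]

lemma bPr_nonneg {a b : ℝ} (ha : 0 ≤ a) (hb : 0 ≤ b) (han : a ≤ n) (hbn : b ≤ n)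
    (hn : 0 < n) (A : Set (SampleSpace n)) : 0 ≤ bPr a b n A := by
  refine Finset.sum_nonneg fun ω _ => ?_
  split
  · exact bmass_nonneg ha hb han hbn hn ω
  · exact le_rfl

lemma bPr_mono {a b : ℝ} (ha : 0 ≤ a) (hb : 0 ≤ b) (han : a ≤ n) (hbn : b ≤ n)
    (hn : 0 < n) {A B : Set (SampleSpace n)} (hAB : A ⊆ B) :
    bPr a b n A ≤ bPr a b n B := by
  refine Finset.sum_le_sum fun ω _ => ?_
  by_cases h : ω ∈ A
  · rw [if_pos h, if_pos (hAB h)]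
  · rw [if_neg h]
    split
    · exact bmass_nonneg ha hb han hbn hn ω
    · exact le_rfl


/-- The correlation statistic maximized by the estimator. -/
def Qs (a b : ℝ) {n : ℕ} (G : SGraph n) (τ : Fin n → Bool) : ℝ :=
  (if b ≤ a then (1:ℝ) else -1) *
    ∑ e : EdgeIdx n, chi τ e * ((if G e then (1:ℝ) else 0) - (a + b) / 2 / n)

/-- The estimator: a labelling maximizing `Qs`. -/
def est (a b : ℝ) (n : ℕ) (G : SGraph n) : Fin n → Bool :=
  Classical.choose (Finset.exists_max_image Finset.univ (Qs a b G)
    ⟨fun _ => true, Finset.mem_univ _⟩)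

lemma est_spec (a b : ℝ) (n : ℕ) (G : SGraph n) (τ : Fin n → Bool) :
    Qs a b G τ ≤ Qs a b G (est a b n G) := by
  obtain ⟨-, h⟩ := Classical.choose_spec (Finset.exists_max_image Finset.univ (Qs a b G)
    ⟨fun _ => true, Finset.mem_univ _⟩)
  exact h τ (Finset.mem_univ τ)

/-- Decomposition of a sum over ordered pairs into diagonal and edges. -/
lemma sum_pairs (F : Fin n → Fin n → ℝ) (hF : ∀ u v, F u v = F v u) :
    ∑ p : Fin n × Fin n, F p.1 p.2
      = (∑ v : Fin n, F v v) + 2 * ∑ e : EdgeIdx n, F e.1.1 e.1.2 := by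
  classical
  have hlt : ∑ p ∈ Finset.univ.filter (fun p : Fin n × Fin n => p.1 < p.2), F p.1 p.2
      = ∑ e : EdgeIdx n, F e.1.1 e.1.2 := by
    exact Finset.sum_subtype _ (fun p => by simp) (fun p : Fin n × Fin n => F p.1 p.2)
  have hgt : ∑ p ∈ Finset.univ.filter (fun p : Fin n × Fin n => p.2 < p.1), F p.1 p.2
      = ∑ p ∈ Finset.univ.filter (fun p : Fin n × Fin n => p.1 < p.2), F p.1 p.2 := by
    refine Finset.sum_bij' (fun p _ => (p.2, p.1)) (fun p _ => (p.2, p.1)) ?_ ?_ ?_ ?_ ?_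
    · intro p hp; simp at hp ⊢; exact hp
    · intro p hp; simp at hp ⊢; exact hp
    · intro p _; rfl
    · intro p _; rfl
    · intro p _; exact hF p.1 p.2
  have hdiag : ∑ p ∈ Finset.univ.filter (fun p : Fin n × Fin n => p.1 = p.2), F p.1 p.2
      = ∑ v : Fin n, F v v := by
    refine Finset.sum_bij' (fun p _ => p.1) (fun v _ => (v, v)) ?_ ?_ ?_ ?_ ?_
    · intro p hp; exact Finset.mem_univ _
    · intro v _; simp
    · intro p hp; simp at hp; ext <;> simp [hp]
    · intro v _; rfl
    · intro p hp; simp at hp; rw [← hp]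
  have hsplit := Finset.sum_filter_add_sum_filter_not Finset.univ
    (fun p : Fin n × Fin n => p.1 < p.2) (fun p : Fin n × Fin n => F p.1 p.2)
  have hsplit2 := Finset.sum_filter_add_sum_filter_not
    (Finset.univ.filter (fun p : Fin n × Fin n => ¬ p.1 < p.2))
    (fun p : Fin n × Fin n => p.1 = p.2) (fun p : Fin n × Fin n => F p.1 p.2)
  have e1 : (Finset.univ.filter (fun p : Fin n × Fin n => ¬ p.1 < p.2)).filter
      (fun p : Fin n × Fin n => p.1 = p.2)
      = Finset.univ.filter (fun p : Fin n × Fin n => p.1 = p.2) := by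
    rw [Finset.filter_filter]
    apply Finset.filter_congr
    intro p _
    constructor
    · rintro ⟨-, h⟩; exact h
    · intro h; exact ⟨by rw [h]; exact lt_irrefl _, h⟩
  have e2 : (Finset.univ.filter (fun p : Fin n × Fin n => ¬ p.1 < p.2)).filter
      (fun p : Fin n × Fin n => ¬ p.1 = p.2)
      = Finset.univ.filter (fun p : Fin n × Fin n => p.2 < p.1) := by
    rw [Finset.filter_filter]
    apply Finset.filter_congr
    intro p _
    constructor
    · rintro ⟨h1, h2⟩
      rcases lt_trichotomy p.1 p.2 with h | h | h
      · exact absurd h h1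
      · exact absurd h h2
      · exact h
    · intro h; exact ⟨fun h' => absurd (lt_trans h h') (lt_irrefl _), fun h' => by
        rw [h'] at h; exact lt_irrefl _ h⟩
  rw [e1, e2] at hsplit2
  rw [← hsplit, ← hsplit2, hlt, hgt, hdiag, hlt]
  ring

/-- Overlap between two labellings. -/
def Scorr (σ τ : Fin n → Bool) : ℝ := ∑ v : Fin n, sgn (σ v) * sgn (τ v)

/-- Number of edges on which the two labellings' sign products disagree. -/
def Mcount (σ τ : Fin n → Bool) : ℕ :=
  (Finset.univ.filter (fun e : EdgeIdx n => ¬ chi σ e = chi τ e)).card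

lemma four_M (σ τ : Fin n → Bool) :
    4 * (Mcount σ τ : ℝ) = (n:ℝ)^2 - (Scorr σ τ)^2 := by
  classical
  set x : Fin n → ℝ := fun v => sgn (σ v) * sgn (τ v) with hx
  have hx1 : ∀ v, x v * x v = 1 := by
    intro v
    have h1 := sgn_mul_self (σ v)
    have h2 := sgn_mul_self (τ v)
    calc x v * x v = (sgn (σ v) * sgn (σ v)) * (sgn (τ v) * sgn (τ v)) := by rw [hx]; ring
      _ = 1 := by rw [h1, h2]; ring
  -- S^2 as a pair sum
  have hS : (Scorr σ τ)^2 = ∑ p : Fin n × Fin n, x p.1 * x p.2 := by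
    rw [sq]
    rw [show Scorr σ τ = ∑ v : Fin n, x v from rfl]
    rw [Finset.sum_mul_sum Finset.univ Finset.univ x x]
    rw [Fintype.sum_prod_type]
  have hP1 := sum_pairs (n := n) (fun u v => x u * x v) (fun u v => by ring)
  have hP2 := sum_pairs (n := n) (fun _ _ => (1:ℝ)) (fun _ _ => rfl)
  -- pair sum of ones
  have hone : ∑ p : Fin n × Fin n, (1:ℝ) = (n:ℝ)^2 := by
    rw [Finset.sum_const, Finset.card_univ, Fintype.card_prod, Fintype.card_fin,
      nsmul_eq_mul]
    push_cast; ring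
  have hdiag1 : ∑ v : Fin n, x v * x v = (n:ℝ) := by
    rw [Finset.sum_congr rfl fun v _ => hx1 v, Finset.sum_const, Finset.card_univ,
      Fintype.card_fin, nsmul_eq_mul, mul_one]
  have hdiag2 : ∑ v : Fin n, (1:ℝ) = (n:ℝ) := by
    rw [Finset.sum_const, Finset.card_univ, Fintype.card_fin, nsmul_eq_mul, mul_one]
  -- edge sums
  have hedge1 : ∀ e : EdgeIdx n, x e.1.1 * x e.1.2
      = if chi σ e = chi τ e then (1:ℝ) else -1 := by
    intro e
    have hval : x e.1.1 * x e.1.2 = chi σ e * chi τ e := by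
      rw [hx]; unfold chi; ring
    rw [hval]
    split
    · next h => rw [h]; exact chi_mul_self τ e
    · next h =>
        rcases chi_cases σ e with h1 | h1 <;> rcases chi_cases τ e with h2 | h2
        · exact absurd (h1.trans h2.symm) h
        · rw [h1, h2]; norm_num
        · rw [h1, h2]; norm_num
        · exact absurd (h1.trans h2.symm) h
  have hedge2 : ∀ e : EdgeIdx n, (if chi σ e = chi τ e then (1:ℝ) else -1)
      = 1 - (if ¬ chi σ e = chi τ e then (2:ℝ) else 0) := by
    intro e; by_cases h : chi σ e = chi τ e <;> simp [h] <;> norm_num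
  have hT : ∑ e : EdgeIdx n, x e.1.1 * x e.1.2
      = (∑ e : EdgeIdx n, (1:ℝ)) - 2 * (Mcount σ τ : ℝ) := by
    rw [Finset.sum_congr rfl fun e _ => (hedge1 e).trans (hedge2 e)]
    rw [Finset.sum_sub_distrib]
    congr 1
    rw [Finset.sum_ite, Finset.sum_const, Finset.sum_const]
    unfold Mcount
    simp [mul_comm]
  rw [hone] at hP2
  rw [hS, hP1, hdiag1, hT]
  rw [hdiag2] at hP2
  -- hP2 : n^2 = n + 2 * ∑ e, 1
  linarith [hP2]

lemma abs_Scorr_le (σ τ : Fin n → Bool) : |Scorr σ τ| ≤ (n:ℝ) := by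
  unfold Scorr
  refine (Finset.abs_sum_le_sum_abs _ _).trans ?_
  have : ∀ v : Fin n, |sgn (σ v) * sgn (τ v)| = 1 := fun v => by
    rw [abs_mul, abs_sgn, abs_sgn, mul_one]
  rw [Finset.sum_congr rfl fun v _ => this v, Finset.sum_const, Finset.card_univ,
    Fintype.card_fin, nsmul_eq_mul, mul_one]

lemma exp_le_quad {x : ℝ} (h : |x| ≤ 1) : Real.exp x ≤ 1 + x + x^2 := by
  have h2 := Real.exp_bound h (n := 2) (by norm_num)
  norm_num [Finset.sum_range_succ, Nat.factorial] at h2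
  have h3 := (abs_le.mp h2).2
  have h4 : |x|^2 = x^2 := sq_abs x
  nlinarith [sq_nonneg x]

lemma bern_mgf {p x₁ x₂ ν : ℝ} (hp0 : 0 ≤ p) (hp1 : p ≤ 1) (h1 : |x₁| ≤ 1) (h2 : |x₂| ≤ 1)
    (hν : p * x₁^2 + (1 - p) * x₂^2 ≤ ν) :
    p * Real.exp x₁ + (1 - p) * Real.exp x₂ ≤ Real.exp (p * x₁ + (1 - p) * x₂ + ν) := by
  have e1 := exp_le_quad h1
  have e2 := exp_le_quad h2
  have key : p * Real.exp x₁ + (1-p) * Real.exp x₂ ≤ 1 + (p*x₁ + (1-p)*x₂ + ν) := by nlinarith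
  refine key.trans ?_
  linarith [Real.add_one_le_exp (p*x₁ + (1-p)*x₂ + ν)]


lemma sgn_mul_of_ne {c c' : Bool} (h : ¬ c = c') : sgn c * sgn c' = -1 := by
  cases c <;> cases c' <;> simp [sgn] at h ⊢

set_option maxHeartbeats 2000000 in
/-- The Chernoff bound for a single pair of labellings: the probability (over the
graph, conditionally on the labels `σ`) that `τ` scores at least as well as `σ`
is exponentially small in the number of disagreeing edges. -/
lemma chernoff (a b : ℝ) (n : ℕ) (hn : 0 < n) (ha : 0 ≤ a) (hb : 0 ≤ b)
    (han : a ≤ n) (hbn : b ≤ n) (hd : 0 < (a + b) / 2) (σ τ : Fin n → Bool) :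
    ∑ G : SGraph n, cmass a b σ G * (if Qs a b G σ ≤ Qs a b G τ then (1:ℝ) else 0)
      ≤ Real.exp (-(Mcount σ τ : ℝ) * ((a - b) / 2)^2 / (12 * ((a + b) / 2) * n)) := by
  have hn' : (0:ℝ) < n := by exact_mod_cast hn
  set d : ℝ := (a + b) / 2 with hd_def
  set s : ℝ := (a - b) / 2 with hs_def
  set sg : ℝ := if b ≤ a then (1:ℝ) else -1 with hsg_def
  set lam : ℝ := |s| / (12 * d) with hlam_def
  set w : EdgeIdx n → ℝ := fun e => sg * (chi σ e - chi τ e) with hw_def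
  have hsd : |s| ≤ d := by
    rw [hs_def, hd_def, abs_div, abs_two,
      div_le_div_iff_of_pos_right (by norm_num : (0:ℝ) < 2)]
    exact abs_le.mpr ⟨by linarith, by linarith⟩
  have hlam0 : 0 ≤ lam := div_nonneg (abs_nonneg s) (by linarith)
  have hlam12 : lam ≤ 1/12 := by
    rw [hlam_def, div_le_iff₀ (by linarith : (0:ℝ) < 12 * d)]
    linarith
  have hsgs : sg * s = |s| := by
    rw [hsg_def]
    split
    · next h =>
        rw [one_mul, abs_of_nonneg (show (0:ℝ) ≤ s by rw [hs_def]; linarith)]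
    · next h =>
        push_neg at h
        rw [neg_one_mul, abs_of_neg (show s < 0 by rw [hs_def]; linarith)]
  have hsg2 : sg * sg = 1 := by rw [hsg_def]; split <;> norm_num
  have hdn1 : d / (n:ℝ) ≤ 1 := by rw [div_le_one hn', hd_def]; linarith
  have hdn0 : 0 ≤ d / (n:ℝ) := le_of_lt (div_pos hd hn')
  have habs_w : ∀ e : EdgeIdx n, |w e| ≤ 2 := by
    intro e
    rw [hw_def]
    simp only []
    rw [abs_mul]
    have h1 : |sg| = 1 := by rw [hsg_def]; split <;> norm_num
    rw [h1, one_mul, sub_eq_add_neg]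
    refine (abs_add_le _ _).trans ?_
    rw [abs_neg]
    linarith [abs_chi σ e, abs_chi τ e]
  have habs_xy : ∀ (y : ℝ), |y| ≤ 1 → ∀ e : EdgeIdx n, |(-(lam * (w e * y)))| ≤ 1 := by
    intro y hy e
    rw [abs_neg, abs_mul, abs_mul, abs_of_nonneg hlam0]
    calc lam * (|w e| * |y|) ≤ (1/12) * (2 * 1) := by
          refine mul_le_mul hlam12 ?_ (by positivity) (by norm_num)
          exact mul_le_mul (habs_w e) hy (abs_nonneg _) (by norm_num)
      _ ≤ 1 := by norm_num
  have hQ : ∀ G : SGraph n, Qs a b G σ - Qs a b G τ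
      = ∑ e : EdgeIdx n, w e * ((if G e then (1:ℝ) else 0) - d / n) := by
    intro G
    unfold Qs
    rw [← hd_def, ← hsg_def, ← mul_sub, ← Finset.sum_sub_distrib, Finset.mul_sum]
    refine Finset.sum_congr rfl fun e _ => ?_
    simp only [hw_def]
    ring
  set f : EdgeIdx n → Bool → ℝ := fun e c =>
    (if c then prE a b n σ e else 1 - prE a b n σ e) *
      Real.exp (-(lam * (w e * ((if c then (1:ℝ) else 0) - d / n)))) with hf_def
  set zb : EdgeIdx n → ℝ := fun e =>
    if chi σ e = chi τ e then (0:ℝ) else -(s^2 / (12 * d * n)) with hzb_def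
  calc ∑ G : SGraph n, cmass a b σ G * (if Qs a b G σ ≤ Qs a b G τ then (1:ℝ) else 0)
      ≤ ∑ G : SGraph n, cmass a b σ G
          * Real.exp (-(lam * (Qs a b G σ - Qs a b G τ))) := by
        refine Finset.sum_le_sum fun G _ => ?_
        refine mul_le_mul_of_nonneg_left ?_ (cmass_nonneg ha hb han hbn hn σ G)
        by_cases hQle : Qs a b G σ ≤ Qs a b G τ
        · rw [if_pos hQle]
          have h0 : 0 ≤ -(lam * (Qs a b G σ - Qs a b G τ)) := by nlinarith
          linarith [Real.add_one_le_exp (-(lam * (Qs a b G σ - Qs a b G τ)))]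
        · rw [if_neg hQle]
          exact le_of_lt (Real.exp_pos _)
    _ = ∏ e : EdgeIdx n, (f e true + f e false) := by
        rw [← sum_graph f]
        refine Finset.sum_congr rfl fun G _ => ?_
        rw [hQ G, cmass_eq, Finset.mul_sum, ← Finset.sum_neg_distrib, Real.exp_sum,
          ← Finset.prod_mul_distrib]
    _ ≤ ∏ e : EdgeIdx n, Real.exp (zb e) := by
        refine Finset.prod_le_prod (fun e _ => ?_) (fun e _ => ?_)
        · have h1 := prE_nonneg ha hb σ e
          have h2 := prE_le_one han hbn hn σ e
          simp only [hf_def]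
          norm_num
          refine add_nonneg (mul_nonneg h1 (Real.exp_pos _).le)
            (mul_nonneg (by linarith) (Real.exp_pos _).le)
        · have hp0 := prE_nonneg ha hb σ e
          have hp1 := prE_le_one han hbn hn σ e
          set p : ℝ := prE a b n σ e with hp_def
          have hstep : f e true + f e false
              = p * Real.exp (-(lam * (w e * ((1:ℝ) - d / n))))
                + (1 - p) * Real.exp (-(lam * (w e * ((0:ℝ) - d / n)))) := by
            simp only [hf_def]
            norm_num
            rw [hp_def]
          rw [hstep]
          have hy1 : |(1:ℝ) - d / n| ≤ 1 := abs_le.mpr ⟨by linarith, by linarith⟩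
          have hy2 : |(0:ℝ) - d / n| ≤ 1 := abs_le.mpr ⟨by linarith, by linarith⟩
          have hp2t : p ≤ 2 * (d / n) := by
            have h2d : 2 * (d / (n:ℝ)) = (a + b) / n := by rw [hd_def]; ring
            rw [h2d, hp_def]
            unfold prE
            split
            · exact (div_le_div_iff_of_pos_right hn').mpr (by linarith)
            · exact (div_le_div_iff_of_pos_right hn').mpr (by linarith)
          have inner : p * (1 - d/(n:ℝ))^2 + (1 - p) * (d/(n:ℝ))^2 ≤ 3 * (d/(n:ℝ)) := by
            nlinarith [hp2t, hdn0, hdn1, hp0, hp1, sq_nonneg (1 - d/(n:ℝ))]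
          have hν : p * (-(lam * (w e * ((1:ℝ) - d / n))))^2
              + (1 - p) * (-(lam * (w e * ((0:ℝ) - d / n))))^2
              ≤ lam^2 * (w e)^2 * (3 * (d/(n:ℝ))) := by
            have expand : p * (-(lam * (w e * ((1:ℝ) - d / n))))^2
                + (1 - p) * (-(lam * (w e * ((0:ℝ) - d / n))))^2
                = lam^2 * (w e)^2 * (p * (1 - d/(n:ℝ))^2 + (1 - p) * (d/(n:ℝ))^2) := by
              ring
            rw [expand]
            exact mul_le_mul_of_nonneg_left inner (by positivity)
          have hbern := bern_mgf hp0 hp1 (habs_xy _ hy1 e) (habs_xy _ hy2 e) hν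
          refine hbern.trans (Real.exp_le_exp.mpr ?_)
          by_cases hch : chi σ e = chi τ e
          · have hwe : w e = 0 := by simp only [hw_def]; rw [hch]; ring
            have hz0 : zb e = 0 := by simp only [hzb_def]; rw [if_pos hch]
            rw [hz0, hwe]
            norm_num
          · have hzb2 : zb e = -(s^2 / (12 * d * n)) := by
              simp only [hzb_def]; rw [if_neg hch]
            rw [hzb2]
            have hpd : p - d / (n:ℝ) = s * chi σ e / n := by
              rw [hp_def]
              unfold prE
              by_cases hσe : σ e.1.1 = σ e.1.2
              · rw [if_pos hσe]
                have hχ : chi σ e = 1 := by unfold chi; rw [hσe]; exact sgn_mul_self _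
                rw [hχ, hd_def, hs_def]; ring
              · rw [if_neg hσe]
                have hχ : chi σ e = -1 := by unfold chi; exact sgn_mul_of_ne hσe
                rw [hχ, hd_def, hs_def]; ring
            have hwp : w e * (p - d/(n:ℝ)) = 2 * |s| / n := by
              rw [hpd]
              simp only [hw_def]
              rcases chi_cases σ e with h1 | h1 <;> rcases chi_cases τ e with h2 | h2
              · exact absurd (h1.trans h2.symm) hch
              · rw [h1, h2, ← hsgs]; ring
              · rw [h1, h2, ← hsgs]; ring
              · exact absurd (h1.trans h2.symm) hch
            have hw2 : (w e)^2 = 4 := by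
              simp only [hw_def]
              rcases chi_cases σ e with h1 | h1 <;> rcases chi_cases τ e with h2 | h2
              · exact absurd (h1.trans h2.symm) hch
              · rw [h1, h2]; linear_combination 4 * hsg2
              · rw [h1, h2]; linear_combination 4 * hsg2
              · exact absurd (h1.trans h2.symm) hch
            have hm : p * (-(lam * (w e * ((1:ℝ) - d / n))))
                + (1-p) * (-(lam * (w e * ((0:ℝ) - d / n))))
                = -(lam * (w e * (p - d/(n:ℝ)))) := by ring
            rw [hm, hwp]
            have h1 : lam * (2 * |s| / ↑n) = (2 / (n:ℝ)) * (lam * |s|) := by ring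
            have h2 : lam * |s| = s * s / (12 * d) := by
              rw [hlam_def, div_mul_eq_mul_div, abs_mul_abs_self]
            have h3 : lam^2 * (w e)^2 * (3 * (d/(n:ℝ)))
                = (s * s / (144 * (d*d))) * 4 * (3 * (d/(n:ℝ))) := by
              rw [hw2]
              congr 1
              congr 1
              rw [sq, hlam_def, div_mul_div_comm, abs_mul_abs_self,
                show (12*d)*(12*d) = 144*(d*d) by ring]
            rw [h1, h2, h3]
            apply le_of_eq
            have hd0 : d ≠ 0 := ne_of_gt hd
            have hn0 : (n:ℝ) ≠ 0 := ne_of_gt hn'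
            field_simp
            ring
    _ = Real.exp (-(Mcount σ τ : ℝ) * s^2 / (12 * d * n)) := by
        rw [← Real.exp_sum]
        congr 1
        simp only [hzb_def]
        rw [Finset.sum_ite (fun _ => (0:ℝ)) (fun _ => -(s^2 / (12 * d * n)))]
        rw [Finset.sum_const_zero, zero_add, Finset.sum_const, nsmul_eq_mul]
        unfold Mcount
        ring


/-- Chernoff bound for a pair of labellings with small overlap. -/
lemma pair_bound (a b : ℝ) (n : ℕ) (hn : 0 < n) (ha : 0 ≤ a) (hb : 0 ≤ b)
    (han : a ≤ n) (hbn : b ≤ n) (hd : 0 < (a + b) / 2)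
    (ε : ℝ) (hε0 : 0 < ε) (hε1 : ε ≤ 1)
    (σ τ : Fin n → Bool) (hS : |Scorr σ τ| ≤ (1 - ε) * n) :
    ∑ G : SGraph n, cmass a b σ G * (if Qs a b G σ ≤ Qs a b G τ then (1:ℝ) else 0)
      ≤ Real.exp (-(ε * n * ((a - b) / 2)^2 / (48 * ((a + b) / 2)))) := by
  refine (chernoff a b n hn ha hb han hbn hd σ τ).trans (Real.exp_le_exp.mpr ?_)
  have hn' : (0:ℝ) < n := by exact_mod_cast hn
  have hM := four_M σ τ
  have hM2 : ε * (n:ℝ)^2 ≤ 4 * (Mcount σ τ : ℝ) := by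
    rw [hM]
    have hSsq : (Scorr σ τ)^2 ≤ ((1 - ε) * n)^2 := by
      rw [← sq_abs (Scorr σ τ)]
      exact pow_le_pow_left₀ (abs_nonneg _) hS 2
    nlinarith [hn'.le, sq_nonneg ((n:ℝ))]
  have key : ε * n * ((a - b) / 2)^2 / (48 * ((a + b) / 2))
      ≤ (Mcount σ τ : ℝ) * ((a - b) / 2)^2 / (12 * ((a + b) / 2) * n) := by
    rw [div_le_div_iff₀ (by positivity) (by positivity)]
    nlinarith [mul_le_mul_of_nonneg_left hM2
      (show (0:ℝ) ≤ 12 * ((a + b) / 2) * ((a - b) / 2)^2 by positivity)]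
  calc -(Mcount σ τ : ℝ) * ((a - b) / 2)^2 / (12 * ((a + b) / 2) * n)
      = -((Mcount σ τ : ℝ) * ((a - b) / 2)^2 / (12 * ((a + b) / 2) * n)) := by ring
    _ ≤ -(ε * n * ((a - b) / 2)^2 / (48 * ((a + b) / 2))) := neg_le_neg key

/-- The union bound: probability that the estimator has poor overlap. -/
lemma main_bound (a b : ℝ) (n : ℕ) (hn : 0 < n) (ha : 0 ≤ a) (hb : 0 ≤ b)
    (han : a ≤ n) (hbn : b ≤ n) (hd : 0 < (a + b) / 2)
    (ε : ℝ) (hε0 : 0 < ε) (hε1 : ε ≤ 1) :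
    bPr a b n {ω : SampleSpace n |
        ¬ |(1 / (n : ℝ)) * |∑ v : Fin n, sgn (ω.1 v) * sgn (est a b n ω.2 v)| - 1| ≤ ε}
      ≤ 2^n * Real.exp (-(ε * n * ((a - b) / 2)^2 / (48 * ((a + b) / 2)))) := by
  classical
  have hn' : (0:ℝ) < n := by exact_mod_cast hn
  set A : Set (SampleSpace n) := {ω : SampleSpace n |
      ¬ |(1 / (n : ℝ)) * |∑ v : Fin n, sgn (ω.1 v) * sgn (est a b n ω.2 v)| - 1| ≤ ε}
    with hA_def
  set E : ℝ := Real.exp (-(ε * n * ((a - b) / 2)^2 / (48 * ((a + b) / 2)))) with hE_def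
  have claim : ∀ (σ : Fin n → Bool) (G : SGraph n),
      (if (σ, G) ∈ A then (1:ℝ) else 0)
        ≤ ∑ τ : Fin n → Bool, (if |Scorr σ τ| ≤ (1 - ε) * n then (1:ℝ) else 0)
            * (if Qs a b G σ ≤ Qs a b G τ then (1:ℝ) else 0) := by
    intro σ G
    have hnonneg : ∀ τ : Fin n → Bool, 0 ≤ (if |Scorr σ τ| ≤ (1 - ε) * n then (1:ℝ) else 0)
        * (if Qs a b G σ ≤ Qs a b G τ then (1:ℝ) else 0) :=
      fun τ => mul_nonneg (by split <;> norm_num) (by split <;> norm_num)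
    by_cases hA : (σ, G) ∈ A
    · rw [if_pos hA]
      have hτ := est_spec a b n G σ
      have h1 : ¬ |(1 / (n:ℝ)) * |Scorr σ (est a b n G)| - 1| ≤ ε := hA
      have hSn : |Scorr σ (est a b n G)| ≤ (n:ℝ) := abs_Scorr_le σ _
      have hover : |Scorr σ (est a b n G)| ≤ (1 - ε) * n := by
        by_contra hc
        push_neg at hc
        apply h1
        rw [abs_le]
        have e1 : (1 / (n:ℝ)) * ((1 - ε) * n) = 1 - ε := by field_simp
        have e2 : (1 / (n:ℝ)) * (n:ℝ) = 1 := by field_simp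
        have k1 := mul_le_mul_of_nonneg_left hc.le (le_of_lt (one_div_pos.mpr hn'))
        have k2 := mul_le_mul_of_nonneg_left hSn (le_of_lt (one_div_pos.mpr hn'))
        constructor
        · rw [e1] at k1; linarith
        · rw [e2] at k2; linarith
      refine le_trans ?_ (Finset.single_le_sum (fun τ _ => hnonneg τ)
        (Finset.mem_univ (est a b n G)))
      rw [if_pos hover, if_pos hτ]
      norm_num
    · rw [if_neg hA]
      exact Finset.sum_nonneg fun τ _ => hnonneg τ
  have step1 : bPr a b n A
      = ∑ σ : Fin n → Bool, ∑ G : SGraph n,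
          (1/2:ℝ)^n * (cmass a b σ G * (if (σ, G) ∈ A then (1:ℝ) else 0)) := by
    have h0 : bPr a b n A
        = ∑ p : (Fin n → Bool) × SGraph n, (if p ∈ A then bmass a b n p else 0) := by
      unfold bPr
      exact Fintype.sum_equiv (Equiv.refl _) _ _ (fun _ => rfl)
    rw [h0, Fintype.sum_prod_type]
    refine Finset.sum_congr rfl fun σ _ => Finset.sum_congr rfl fun G _ => ?_
    have hb0 : bmass a b n (σ, G) = (1/2:ℝ)^n * cmass a b σ G := rfl
    by_cases h : (σ, G) ∈ A
    · rw [if_pos h, if_pos h, hb0]; ring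
    · rw [if_neg h, if_neg h]; ring
  have step2 : ∀ σ : Fin n → Bool,
      ∑ G : SGraph n, (1/2:ℝ)^n * (cmass a b σ G * (if (σ, G) ∈ A then (1:ℝ) else 0))
        ≤ (1/2:ℝ)^n * (2^n * E) := by
    intro σ
    rw [← Finset.mul_sum]
    refine mul_le_mul_of_nonneg_left ?_ (by positivity)
    calc ∑ G : SGraph n, cmass a b σ G * (if (σ, G) ∈ A then (1:ℝ) else 0)
        ≤ ∑ G : SGraph n, cmass a b σ G
            * ∑ τ : Fin n → Bool, (if |Scorr σ τ| ≤ (1 - ε) * n then (1:ℝ) else 0)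
                * (if Qs a b G σ ≤ Qs a b G τ then (1:ℝ) else 0) := by
          refine Finset.sum_le_sum fun G _ => ?_
          exact mul_le_mul_of_nonneg_left (claim σ G)
            (cmass_nonneg ha hb han hbn hn σ G)
      _ = ∑ τ : Fin n → Bool, (if |Scorr σ τ| ≤ (1 - ε) * n then (1:ℝ) else 0)
            * ∑ G : SGraph n, cmass a b σ G
                * (if Qs a b G σ ≤ Qs a b G τ then (1:ℝ) else 0) := by
          rw [Finset.sum_congr rfl fun G _ => Finset.mul_sum _ _ _]
          rw [Finset.sum_comm]
          refine Finset.sum_congr rfl fun τ _ => ?_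
          rw [Finset.mul_sum]
          exact Finset.sum_congr rfl fun G _ => by ring
      _ ≤ ∑ τ : Fin n → Bool, E := by
          refine Finset.sum_le_sum fun τ _ => ?_
          by_cases hc : |Scorr σ τ| ≤ (1 - ε) * n
          · rw [if_pos hc, one_mul, hE_def]
            exact pair_bound a b n hn ha hb han hbn hd ε hε0 hε1 σ τ hc
          · rw [if_neg hc, zero_mul, hE_def]
            exact le_of_lt (Real.exp_pos _)
      _ = 2^n * E := by
          rw [Finset.sum_const, Finset.card_univ, Fintype.card_fun, Fintype.card_bool,
            Fintype.card_fin, nsmul_eq_mul]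
          push_cast
          ring
  calc bPr a b n A
      ≤ ∑ σ : Fin n → Bool, (1/2:ℝ)^n * (2^n * E) := by
        rw [step1]
        exact Finset.sum_le_sum fun σ _ => step2 σ
    _ = 2^n * E := by
        rw [Finset.sum_const, Finset.card_univ, Fintype.card_fun, Fintype.card_bool,
          Fintype.card_fin, nsmul_eq_mul]
        push_cast
        rw [show ((2:ℝ)^n * ((1/2:ℝ)^n * (2^n * E))) = (2 * (1/2:ℝ))^n * (2^n * E) by
          rw [mul_pow]; ring]
        norm_num

end BlockAux

end AuxProof

/-- For sequences `a n, b n ≥ 0` with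
`log(max(a n, b n, 2)) · log log n / log n → 0` and `s_n²/d_n → ∞`, one can a.a.s.
recover the planted bisection up to `o(n)` errors: there are estimators `τ` such
that `(1/n)|∑_v σ_v τ_v| → 1` in probability. -/
theorem clustering_accurate (a b : ℕ → ℝ) (ha : ∀ n, 0 ≤ a n) (hb : ∀ n, 0 ≤ b n)
    (hgrowth : Filter.Tendsto
      (fun n : ℕ =>
        Real.log (max (max (a n) (b n)) 2) * Real.log (Real.log n) / Real.log n)
      Filter.atTop (nhds 0))
    (hsd : Filter.Tendsto
      (fun n : ℕ => ((a n - b n) / 2) ^ 2 / ((a n + b n) / 2))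
      Filter.atTop Filter.atTop) :
    ∃ τ : (n : ℕ) → SGraph n → (Fin n → Bool),
      ∀ ε > (0 : ℝ),
        Filter.Tendsto
          (fun n : ℕ => bPr (a n) (b n) n
            {ω : SampleSpace n |
              |(1 / (n : ℝ)) * |∑ v : Fin n, sgn (ω.1 v) * sgn (τ n ω.2 v)| - 1| ≤ ε})
          Filter.atTop (nhds 1) := by
  classical
  refine ⟨fun n => BlockAux.est (a n) (b n) n, ?_⟩
  intro ε hε
  set ε' : ℝ := min ε 1 with hε'def
  have hε'0 : 0 < ε' := lt_min hε one_pos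
  have hε'1 : ε' ≤ 1 := min_le_right _ _
  have hε'ε : ε' ≤ ε := min_le_left _ _
  -- eventually `a n ≤ n` and `b n ≤ n`
  have l1 : Filter.Tendsto (fun n : ℕ => Real.log n) Filter.atTop Filter.atTop :=
    Real.tendsto_log_atTop.comp tendsto_natCast_atTop_atTop
  have l2 : Filter.Tendsto (fun n : ℕ => Real.log (Real.log n)) Filter.atTop Filter.atTop :=
    Real.tendsto_log_atTop.comp l1
  have hgr : ∀ᶠ n : ℕ in Filter.atTop, a n ≤ n ∧ b n ≤ n := by
    filter_upwards [l1.eventually_ge_atTop 1, l2.eventually_ge_atTop 1,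
      hgrowth.eventually_lt_const (show (0:ℝ) < 1/2 by norm_num)] with n hL hLL hf
    have hM2 : (2:ℝ) ≤ max (max (a n) (b n)) 2 := le_max_right _ _
    have hlogM : 0 ≤ Real.log (max (max (a n) (b n)) 2) := Real.log_nonneg (by linarith)
    have hL0 : (0:ℝ) < Real.log n := by linarith
    have h1 : Real.log (max (max (a n) (b n)) 2) * Real.log (Real.log n)
        < (1/2) * Real.log n := by
      have := (div_lt_iff₀ hL0).mp hf
      linarith
    have h2 : Real.log (max (max (a n) (b n)) 2) < Real.log n := by
      nlinarith [hLL, hlogM]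
    have hn1 : (1:ℝ) < n := by
      by_contra hcon
      push_neg at hcon
      have : Real.log n ≤ 0 := Real.log_nonpos (by positivity) hcon
      linarith
    have hMn : max (max (a n) (b n)) 2 ≤ n := by
      by_contra hcon
      push_neg at hcon
      have := Real.log_le_log (by linarith : (0:ℝ) < n) hcon.le
      linarith
    exact ⟨le_trans (le_trans (le_max_left _ _) (le_max_left _ _)) hMn,
      le_trans (le_trans (le_max_right _ _) (le_max_left _ _)) hMn⟩
  have hC : ∀ᶠ n : ℕ in Filter.atTop,
      48 * (1 + Real.log 2) / ε' ≤ ((a n - b n) / 2) ^ 2 / ((a n + b n) / 2) :=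
    hsd.eventually_ge_atTop _
  -- the failure event
  set Fail : (m : ℕ) → Set (SampleSpace m) := fun m =>
    {ω : SampleSpace m |
      ¬ |(1 / (m : ℝ)) * |∑ v : Fin m, sgn (ω.1 v) * sgn (BlockAux.est (a m) (b m) m ω.2 v)| - 1| ≤ ε}
    with hFail_def
  have hmain : ∀ᶠ n : ℕ in Filter.atTop,
      bPr (a n) (b n) n (Fail n) ≤ Real.exp (-(n:ℝ)) ∧ 0 ≤ bPr (a n) (b n) n (Fail n) := by
    filter_upwards [hgr, hC, Filter.eventually_ge_atTop 1] with n hab hsd' hn1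
    obtain ⟨han, hbn⟩ := hab
    have hn : 0 < n := hn1
    have hn' : (0:ℝ) < n := by exact_mod_cast hn
    have hd : 0 < (a n + b n) / 2 := by
      rcases lt_or_eq_of_le (show (0:ℝ) ≤ (a n + b n) / 2 by
        have := ha n; have := hb n; linarith) with h | h
      · exact h
      · exfalso
        have ha0 : a n = 0 := by have := ha n; have := hb n; linarith
        have hb0 : b n = 0 := by have := ha n; have := hb n; linarith
        rw [ha0, hb0] at hsd'
        norm_num at hsd'
        have : 0 < 48 * (1 + Real.log 2) / ε' := by
          have := Real.log_pos (by norm_num : (1:ℝ) < 2)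
          positivity
        linarith
    constructor
    · have step1 : bPr (a n) (b n) n (Fail n)
          ≤ bPr (a n) (b n) n {ω : SampleSpace n |
              ¬ |(1 / (n : ℝ)) * |∑ v : Fin n, sgn (ω.1 v)
                  * sgn (BlockAux.est (a n) (b n) n ω.2 v)| - 1| ≤ ε'} := by
        refine BlockAux.bPr_mono (ha n) (hb n) han hbn hn ?_
        intro ω hω
        intro hle
        exact hω (le_trans hle hε'ε)
      have step2 := BlockAux.main_bound (a n) (b n) n hn (ha n) (hb n) han hbn hd
        ε' hε'0 hε'1
      have step3 : (2:ℝ)^n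
            * Real.exp (-(ε' * n * ((a n - b n) / 2)^2 / (48 * ((a n + b n) / 2))))
          ≤ Real.exp (-(n:ℝ)) := by
        have hE : (1 + Real.log 2) * n ≤ ε' * n * ((a n - b n) / 2)^2 / (48 * ((a n + b n) / 2)) := by
          have hmul := mul_le_mul_of_nonneg_left hsd'
            (show (0:ℝ) ≤ ε' * n / 48 by positivity)
          have e1 : ε' * (n:ℝ) / 48 * (48 * (1 + Real.log 2) / ε')
              = (1 + Real.log 2) * n := by
            field_simp
          have e2 : ε' * (n:ℝ) / 48 * (((a n - b n) / 2) ^ 2 / ((a n + b n) / 2))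
              = ε' * n * ((a n - b n) / 2)^2 / (48 * ((a n + b n) / 2)) := by
            field_simp
          rw [e1, e2] at hmul
          exact hmul
        have h2n : (2:ℝ)^n = Real.exp ((n:ℝ) * Real.log 2) := by
          rw [Real.exp_nat_mul, Real.exp_log (by norm_num : (0:ℝ) < 2)]
        rw [h2n, ← Real.exp_add]
        apply Real.exp_le_exp.mpr
        have hlog2 : Real.log 2 ≤ 1 := by
          have := Real.exp_one_gt_d9
          have h27 : Real.log 2 < 1 := by
            rw [show (1:ℝ) = Real.log (Real.exp 1) by rw [Real.log_exp]]
            apply Real.log_lt_log (by norm_num)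
            linarith
          linarith
        nlinarith [hE, hn'.le]
      exact step1.trans (step2.trans step3)
    · exact BlockAux.bPr_nonneg (ha n) (hb n) han hbn hn _
  -- conclude
  have htend0 : Filter.Tendsto (fun n : ℕ => bPr (a n) (b n) n (Fail n))
      Filter.atTop (nhds 0) := by
    refine squeeze_zero' (hmain.mono fun n h => h.2) (hmain.mono fun n h => h.1) ?_
    exact Real.tendsto_exp_atBot.comp
      (tendsto_neg_atTop_atBot.comp tendsto_natCast_atTop_atTop)
  have hsplit : ∀ n : ℕ,
      bPr (a n) (b n) n
        {ω : SampleSpace n |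
          |(1 / (n : ℝ)) * |∑ v : Fin n, sgn (ω.1 v)
              * sgn (BlockAux.est (a n) (b n) n ω.2 v)| - 1| ≤ ε}
        = 1 - bPr (a n) (b n) n (Fail n) := by
    intro n
    have h := BlockAux.bPr_add_compl (a n) (b n)
      {ω : SampleSpace n |
        |(1 / (n : ℝ)) * |∑ v : Fin n, sgn (ω.1 v)
            * sgn (BlockAux.est (a n) (b n) n ω.2 v)| - 1| ≤ ε}
    rw [Set.compl_setOf] at h
    rw [hFail_def]
    linarith
  have := (tendsto_const_nhds : Filter.Tendsto (fun _ : ℕ => (1:ℝ)) Filter.atTop (nhds 1)).sub htend0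
  rw [sub_zero] at this
  refine this.congr ?_
  intro n
  rw [hsplit n]
end

section
/- Under the Assumption, the first moment of the self-avoiding path weight satisfies E[Y_{u,v} | σ_U] = (1 + n^{−1+o(1)}) σ_u σ_v s^k / n, uniformly: for every δ > 0 there exist η > 0 and N such that for all n ≥ N, all distinct vertices u, v, all U ⊆ V with {u,v} ⊆ U and |U| ≤ n^η, and all labellings σ_U of U, |n · E[Y_{u,v} | σ_U] / (σ_u σ_v s^k) − 1| ≤ n^{−1+δ}, where k = ⌈α log n⌉ and the conditional expectation is with respect to the block model given the labels of the vertices in U. -/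
open Filter Finset
open scoped Classical

section FMAux

open Finset

variable {n k : ℕ}

private lemma sgn_mul_self (b : Bool) : sgn b * sgn b = 1 := by cases b <;> norm_num [sgn]

private lemma sgn_ne_zero (b : Bool) : sgn b ≠ 0 := by cases b <;> norm_num [sgn]

private lemma telescope (f : ℕ → ℝ) (hf : ∀ i, f i * f i = 1) :
    ∀ m : ℕ, ∏ i ∈ Finset.range m, (f i * f (i + 1)) = f 0 * f m
  | 0 => by simpa using (hf 0).symm
  | m + 1 => by
      rw [Finset.prod_range_succ, telescope f hf m]
      calc f 0 * f m * (f m * f (m + 1)) = f 0 * (f m * f m) * f (m + 1) := by ring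
        _ = f 0 * f (m + 1) := by rw [hf m]; ring

private lemma sum_graph (g : EdgeIdx n → Bool → ℝ) :
    ∑ G : SGraph n, ∏ e : EdgeIdx n, g e (G e) = ∏ e : EdgeIdx n, (g e true + g e false) := by
  show ∑ G : EdgeIdx n → Bool, ∏ e, g e (G e) = _
  rw [← Fintype.prod_sum g]
  exact Finset.prod_congr rfl fun e _ => by rw [Fintype.sum_bool]

private def eIdx (x y : Fin n) (h : x ≠ y) : EdgeIdx n :=
  if hlt : x < y then ⟨(x, y), hlt⟩ else ⟨(y, x), h.lt_or_gt.resolve_left hlt⟩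

private lemma adj_eIdx (G : SGraph n) (x y : Fin n) (h : x ≠ y) :
    adj G x y = G (eIdx x y h) := by
  unfold adj
  rcases h.lt_or_gt with hl | hl
  · have e : eIdx x y h = ⟨(x, y), hl⟩ := dif_pos hl
    rw [dif_pos hl, e]
  · have e : eIdx x y h = ⟨(y, x), hl⟩ := dif_neg (asymm hl)
    rw [dif_neg (asymm hl), dif_pos hl, e]

private lemma eIdx_fst_snd (x y : Fin n) (h : x ≠ y) :
    ((eIdx x y h).1.1 = x ∧ (eIdx x y h).1.2 = y) ∨
      ((eIdx x y h).1.1 = y ∧ (eIdx x y h).1.2 = x) := by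
  by_cases hlt : x < y
  · have e : eIdx x y h = ⟨(x, y), hlt⟩ := dif_pos hlt
    rw [e]; exact Or.inl ⟨rfl, rfl⟩
  · have e : eIdx x y h = ⟨(y, x), h.lt_or_gt.resolve_left hlt⟩ := dif_neg hlt
    rw [e]; exact Or.inr ⟨rfl, rfl⟩

private lemma eIdx_eq {x y z w : Fin n} {h1 : x ≠ y} {h2 : z ≠ w}
    (h : eIdx x y h1 = eIdx z w h2) : (x = z ∧ y = w) ∨ (x = w ∧ y = z) := by
  have a := eIdx_fst_snd x y h1
  have b := eIdx_fst_snd z w h2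
  rw [h] at a
  rcases a with ⟨a1, a2⟩ | ⟨a1, a2⟩ <;> rcases b with ⟨b1, b2⟩ | ⟨b1, b2⟩ <;>
    rw [a1] at b1 <;> rw [a2] at b2 <;> subst b1 b2 <;> tauto

private lemma pget_eq (γ : Fin (k + 1) → Fin n) {i : ℕ} (h : i ≤ k) :
    pget γ i = γ ⟨i, Nat.lt_succ_of_le h⟩ :=
  congrArg γ (Fin.ext (Nat.min_eq_left h))

private lemma saw_iff (γ : Fin (k + 1) → Fin n) (u v : Fin n) :
    (IsSAW k γ ∧ pget γ 0 = u ∧ pget γ k = v) ↔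
      (Function.Injective γ ∧ γ ⟨0, Nat.succ_pos k⟩ = u ∧ γ ⟨k, Nat.lt_succ_self k⟩ = v) := by
  rw [pget_eq γ (Nat.zero_le k), pget_eq γ (le_refl k)]
  constructor
  · rintro ⟨⟨-, hinj⟩, h0, hk⟩
    refine ⟨?_, h0, hk⟩
    intro i j hij
    have hi : (i : ℕ) ≤ k := Nat.lt_succ_iff.mp i.isLt
    have hj : (j : ℕ) ≤ k := Nat.lt_succ_iff.mp j.isLt
    have h2 : (i : ℕ) = (j : ℕ) := by
      apply hinj _ hi _ hj
      rw [pget_eq γ hi, pget_eq γ hj]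
      simpa [Fin.eta] using hij
    exact Fin.ext h2
  · rintro ⟨hinj, h0, hk⟩
    refine ⟨⟨?_, ?_⟩, h0, hk⟩
    · intro i hik
      rw [pget_eq γ (le_of_lt hik), pget_eq γ hik]
      intro hEq
      have h2 := congrArg Fin.val (hinj hEq)
      simp only at h2
      omega
    · intro i hi j hj hij
      rw [pget_eq γ hi, pget_eq γ hj] at hij
      simpa using congrArg Fin.val (hinj hij)

end FMAux
section FMAux2

open Finset

variable {n k : ℕ}

private lemma sgn_if (x y : Bool) : sgn x * sgn y = if x = y then 1 else -1 := by
  cases x <;> cases y <;> norm_num [sgn]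

private lemma if_tt {α : Type*} (p q : α) : (if (true : Bool) = true then p else q) = p := rfl

private lemma if_ff {α : Type*} (p q : α) : (if (false : Bool) = true then p else q) = q := rfl

private lemma cmass_total (A B : ℝ) (τ : Fin n → Bool) :
    ∑ G : SGraph n, cmass A B τ G = 1 := by
  unfold cmass
  rw [sum_graph (fun e b =>
    if b then (if τ e.1.1 = τ e.1.2 then A / n else B / n)
    else 1 - (if τ e.1.1 = τ e.1.2 then A / n else B / n))]
  refine Finset.prod_eq_one fun e _ => ?_
  rw [if_tt, if_ff]
  ring

private lemma cE_X {A B S D : ℝ} (hS : S = (A - B) / 2) (hD : D = (A + B) / 2)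
    (τ : Fin n → Bool) (γ : Fin (k + 1) → Fin n) (hγ : Function.Injective γ) (hk : 0 < k) :
    ∑ G : SGraph n, cmass A B τ G * Xweight D G k γ
      = sgn (τ (pget γ 0)) * sgn (τ (pget γ k)) * (S / n) ^ k := by
  have hpg : ∀ i ≤ k, ∀ j ≤ k, pget γ i = pget γ j → i = j := by
    intro i hi j hj h
    rw [pget_eq γ hi, pget_eq γ hj] at h
    simpa using congrArg Fin.val (hγ h)
  have hne : ∀ i < k, pget γ i ≠ pget γ (i + 1) := by
    intro i hik h
    have := hpg i (le_of_lt hik) (i + 1) hik h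
    omega
  set E : ℕ → EdgeIdx n := fun i =>
    if h : pget γ i ≠ pget γ (i + 1) then eIdx _ _ h else eIdx _ _ (hne 0 hk) with hEdef
  have hEeq : ∀ (i : ℕ) (hi : i < k), E i = eIdx (pget γ i) (pget γ (i + 1)) (hne i hi) := by
    intro i hi
    rw [hEdef]
    exact dif_pos (hne i hi)
  have hEinj : ∀ i ∈ Finset.range k, ∀ j ∈ Finset.range k, E i = E j → i = j := by
    intro i hi j hj h
    rw [hEeq i (Finset.mem_range.mp hi), hEeq j (Finset.mem_range.mp hj)] at h
    have hi' := Finset.mem_range.mp hi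
    have hj' := Finset.mem_range.mp hj
    rcases eIdx_eq h with ⟨e1, e2⟩ | ⟨e1, e2⟩
    · exact hpg i (le_of_lt hi') j (le_of_lt hj') e1
    · have := hpg i (le_of_lt hi') (j + 1) hj' e1
      have := hpg (i + 1) hi' j (le_of_lt hj') e2
      omega
  set S' : Finset (EdgeIdx n) := (Finset.range k).image E with hS'def
  set g : EdgeIdx n → Bool → ℝ := fun e b =>
    (if b then (if τ e.1.1 = τ e.1.2 then A / n else B / n)
     else 1 - (if τ e.1.1 = τ e.1.2 then A / n else B / n)) *
    (if e ∈ S' then (if b then (1 : ℝ) else 0) - D / n else 1) with hgdef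
  have hprod : ∀ G : SGraph n, cmass A B τ G * Xweight D G k γ = ∏ e : EdgeIdx n, g e (G e) := by
    intro G
    rw [hgdef]
    simp only []
    rw [Finset.prod_mul_distrib]
    congr 1
    rw [Finset.prod_ite_mem, Finset.univ_inter, hS'def, Finset.prod_image hEinj]
    unfold Xweight
    refine Finset.prod_congr rfl fun i hi => ?_
    have hi' := Finset.mem_range.mp hi
    rw [hEeq i hi']
    unfold W
    rw [adj_eIdx G _ _ (hne i hi')]
  rw [Finset.sum_congr rfl fun G _ => hprod G, sum_graph g]
  have hval : ∀ e : EdgeIdx n, g e true + g e false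
      = if e ∈ S' then sgn (τ e.1.1) * sgn (τ e.1.2) * (S / n) else 1 := by
    intro e
    rw [hgdef]
    simp only [if_tt, if_ff, sgn_if]
    have h2 : A / (n : ℝ) - D / ↑n = S / ↑n := by
      rw [div_sub_div_same]; congr 1; rw [hS, hD]; ring
    have h3 : B / (n : ℝ) - D / ↑n = -(S / ↑n) := by
      rw [div_sub_div_same, ← neg_div]; congr 1; rw [hS, hD]; ring
    by_cases he : e ∈ S' <;> by_cases hτ : τ e.1.1 = τ e.1.2 <;>
      simp only [he, hτ, if_true, if_false, eq_self_iff_true, not_false_iff, ite_true,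
        ite_false] <;>
      first
        | linear_combination h2
        | linear_combination h3
        | ring
  rw [Finset.prod_congr rfl fun e _ => hval e]
  rw [Finset.prod_ite_mem, Finset.univ_inter, hS'def, Finset.prod_image hEinj]
  have hvalE : ∀ i ∈ Finset.range k,
      sgn (τ (E i).1.1) * sgn (τ (E i).1.2) * (S / ↑n)
        = (sgn (τ (pget γ i)) * sgn (τ (pget γ (i + 1)))) * (S / ↑n) := by
    intro i hi
    have hi' := Finset.mem_range.mp hi
    rw [hEeq i hi']
    rcases eIdx_fst_snd (pget γ i) (pget γ (i + 1)) (hne i hi') with ⟨e1, e2⟩ | ⟨e1, e2⟩ <;>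
      rw [e1, e2] <;> ring
  rw [Finset.prod_congr rfl hvalE, Finset.prod_mul_distrib, Finset.prod_const,
    Finset.card_range, telescope (fun i => sgn (τ (pget γ i))) (fun i => sgn_mul_self _) k]

private lemma cE_Ysaw {A B S D : ℝ} (hS : S = (A - B) / 2) (hD : D = (A + B) / 2)
    (τ : Fin n → Bool) (u v : Fin n) (hk : 0 < k) :
    ∑ G : SGraph n, cmass A B τ G * Ysaw D G k u v
      = ((Finset.univ.filter fun γ : Fin (k + 1) → Fin n =>
            IsSAW k γ ∧ pget γ 0 = u ∧ pget γ k = v).card : ℝ)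
          * (sgn (τ u) * sgn (τ v) * (S / n) ^ k) := by
  unfold Ysaw
  simp only [Finset.mul_sum]
  rw [Finset.sum_comm]
  have hterm : ∀ γ : Fin (k + 1) → Fin n,
      (∑ G : SGraph n, cmass A B τ G *
          if IsSAW k γ ∧ pget γ 0 = u ∧ pget γ k = v then Xweight D G k γ else 0)
      = if IsSAW k γ ∧ pget γ 0 = u ∧ pget γ k = v
          then sgn (τ u) * sgn (τ v) * (S / n) ^ k else 0 := by
    intro γ
    by_cases hP : IsSAW k γ ∧ pget γ 0 = u ∧ pget γ k = v
    · rw [if_pos hP, Finset.sum_congr rfl fun G _ => by rw [if_pos hP]]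
      rw [cE_X hS hD τ γ ((saw_iff γ u v).mp hP).1 hk, hP.2.1, hP.2.2]
    · rw [if_neg hP, Finset.sum_congr rfl fun G _ => by rw [if_neg hP, mul_zero],
        Finset.sum_const_zero]
  rw [Finset.sum_congr rfl fun γ _ => hterm γ, ← Finset.sum_filter,
    Finset.sum_const, nsmul_eq_mul]

end FMAux2
section FMAux3

open Finset

variable {n k : ℕ}

private lemma count_upper (u v : Fin n) (hk : 0 < k) :
    (Finset.univ.filter fun γ : Fin (k + 1) → Fin n =>
        IsSAW k γ ∧ pget γ 0 = u ∧ pget γ k = v).card ≤ n ^ (k - 1) := by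
  have := Finset.card_le_card_of_injOn
    (f := fun γ : Fin (k + 1) → Fin n => fun j : Fin (k - 1) => γ ⟨j.1 + 1, by omega⟩)
    (s := Finset.univ.filter fun γ : Fin (k + 1) → Fin n =>
        IsSAW k γ ∧ pget γ 0 = u ∧ pget γ k = v)
    (t := Finset.univ) (fun _ _ => Finset.mem_univ _) ?_
  · calc _ ≤ (Finset.univ : Finset (Fin (k - 1) → Fin n)).card := this
      _ = n ^ (k - 1) := by
        rw [Finset.card_univ, Fintype.card_fun, Fintype.card_fin, Fintype.card_fin]
  · intro γ1 h1 γ2 h2 h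
    obtain ⟨-, h01, hk1⟩ := (saw_iff γ1 u v).mp (Finset.mem_filter.mp h1).2
    obtain ⟨-, h02, hk2⟩ := (saw_iff γ2 u v).mp (Finset.mem_filter.mp h2).2
    funext i
    have hilt := i.isLt
    rcases Nat.eq_zero_or_pos i.1 with h0 | h0
    · have hi : i = ⟨0, Nat.succ_pos k⟩ := Fin.ext h0
      rw [hi, h01, h02]
    · by_cases hik : i.1 = k
      · have hi : i = ⟨k, Nat.lt_succ_self k⟩ := Fin.ext hik
        rw [hi, hk1, hk2]
      · have hlt : i.1 - 1 < k - 1 := by omega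
        have h5 := congrFun h ⟨i.1 - 1, hlt⟩
        simp only [] at h5
        have he : (⟨(i.1 - 1) + 1, by omega⟩ : Fin (k + 1)) = i :=
          Fin.ext (show i.1 - 1 + 1 = i.1 by omega)
        rwa [he] at h5

private def pathOf (u v : Fin n) (f : Fin (k - 1) ↪ {x : Fin n // x ≠ u ∧ x ≠ v}) :
    Fin (k + 1) → Fin n := fun i =>
  if h0 : (i : ℕ) = 0 then u
  else if hkk : (i : ℕ) = k then v
  else (f ⟨(i : ℕ) - 1, by have := i.isLt; omega⟩).1

private lemma count_lower (u v : Fin n) (huv : u ≠ v) (hk : 0 < k) :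
    (n - 2).descFactorial (k - 1) ≤
      (Finset.univ.filter fun γ : Fin (k + 1) → Fin n =>
        IsSAW k γ ∧ pget γ 0 = u ∧ pget γ k = v).card := by
  have hinj : ∀ f : Fin (k - 1) ↪ {x : Fin n // x ≠ u ∧ x ≠ v},
      Function.Injective (pathOf u v f) := by
    intro f i j hij
    have hi := i.isLt
    have hj := j.isLt
    unfold pathOf at hij
    apply Fin.ext
    split_ifs at hij with a1 a2 a3 a4 a5 a6 a7 a8
    · omega
    · exact absurd hij huv
    · exact absurd hij.symm (f ⟨j.1 - 1, by omega⟩).2.1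
    · exact absurd hij.symm huv
    · omega
    · exact absurd hij.symm (f ⟨j.1 - 1, by omega⟩).2.2
    · exact absurd hij (f ⟨i.1 - 1, by omega⟩).2.1
    · exact absurd hij (f ⟨i.1 - 1, by omega⟩).2.2
    · have h5 := f.injective (Subtype.ext hij)
      have h6 : i.1 - 1 = j.1 - 1 := congrArg Fin.val h5
      omega
  have hmem : ∀ f : Fin (k - 1) ↪ {x : Fin n // x ≠ u ∧ x ≠ v},
      pathOf u v f ∈ Finset.univ.filter fun γ : Fin (k + 1) → Fin n =>
        IsSAW k γ ∧ pget γ 0 = u ∧ pget γ k = v := by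
    intro f
    refine Finset.mem_filter.mpr ⟨Finset.mem_univ _, (saw_iff _ u v).mpr ⟨hinj f, ?_, ?_⟩⟩
    · unfold pathOf
      rw [dif_pos rfl]
    · unfold pathOf
      rw [dif_neg (show ¬(k = 0) by omega), dif_pos rfl]
  have hΨinj : ∀ f g : Fin (k - 1) ↪ {x : Fin n // x ≠ u ∧ x ≠ v},
      pathOf u v f = pathOf u v g → f = g := by
    have hval : ∀ (f : Fin (k - 1) ↪ {x : Fin n // x ≠ u ∧ x ≠ v}) (j : Fin (k - 1)),
        pathOf u v f ⟨j.1 + 1, by have := j.isLt; omega⟩ = (f j).1 := by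
      intro f j
      have hjlt := j.isLt
      unfold pathOf
      rw [dif_neg (show ¬(j.1 + 1 = 0) by omega), dif_neg (show ¬(j.1 + 1 = k) by omega)]
      exact congrArg (fun t => (f t : Fin n)) (Fin.ext rfl)
    intro f g hfg
    apply Function.Embedding.ext
    intro j
    exact Subtype.ext ((hval f j).symm.trans ((congrFun hfg _).trans (hval g j)))
  have hcardCS : Fintype.card {x : Fin n // x ≠ u ∧ x ≠ v} = n - 2 := by
    rw [Fintype.card_subtype]
    have : (Finset.univ.filter fun x : Fin n => x ≠ u ∧ x ≠ v)
        = Finset.univ \ {u, v} := by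
      ext x
      simp [not_or]
    rw [this, Finset.card_sdiff_of_subset (Finset.subset_univ _), Finset.card_univ, Fintype.card_fin,
      Finset.card_insert_of_notMem (by simp [huv]), Finset.card_singleton]
  calc (n - 2).descFactorial (k - 1)
      = Fintype.card (Fin (k - 1) ↪ {x : Fin n // x ≠ u ∧ x ≠ v}) := by
        rw [Fintype.card_embedding_eq, hcardCS, Fintype.card_fin]
    _ = (Finset.univ : Finset (Fin (k - 1) ↪ {x : Fin n // x ≠ u ∧ x ≠ v})).card :=
        Finset.card_univ.symm
    _ ≤ _ := Finset.card_le_card_of_injOn (fun f => pathOf u v f)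
        (fun f _ => hmem f) (fun f _ g _ h => hΨinj f g h)

end FMAux3
private lemma sgn_sq (x y : Bool) : (sgn x * sgn y) * (sgn x * sgn y) = 1 := by
  cases x <;> cases y <;> norm_num [sgn]

private lemma sgn_mul_ne_zero (x y : Bool) : sgn x * sgn y ≠ 0 := by
  cases x <;> cases y <;> norm_num [sgn]

/-- Under the Assumption, the first moment of the self-avoiding path
weight satisfies `E[Y_{u,v} | σ_U] = (1 + n^{-1+o(1)}) σ_u σ_v s^k / n`, uniformly over
distinct `u, v`, sets `U ∋ u, v` of size at most `n^η`, and labellings of `U`, where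
`k = ⌈α log n⌉`. -/
theorem first_moment_saw (a b s d : ℕ → ℝ) (α lam : ℝ)
    (hs : ∀ n, s n = (a n - b n) / 2) (hd : ∀ n, d n = (a n + b n) / 2)
    (ha : ∀ n, 0 ≤ a n) (hb : ∀ n, 0 ≤ b n)
    (hlam : 1 < lam) (hsd : ∀ n : ℕ, lam ≤ (s n) ^ 2 / d n)
    (hgrowth : Filter.Tendsto
      (fun n : ℕ =>
        Real.log (max (max |s n| (d n)) 2) * Real.log (Real.log n) / Real.log n)
      Filter.atTop (nhds 0))
    (hα : 0 < α)
    (hαn : ∀ n : ℕ, (n : ℝ) ^ 2 * d n ^ (α * Real.log n)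
      ≤ ((s n) ^ 2) ^ (α * Real.log n)) :
    ∀ δ > (0 : ℝ), ∃ η > (0 : ℝ), ∃ N : ℕ, ∀ n ≥ N, ∀ u v : Fin n, u ≠ v →
      ∀ U : Finset (Fin n), u ∈ U → v ∈ U → (U.card : ℝ) ≤ (n : ℝ) ^ η →
        ∀ τ : Fin n → Bool,
          |(n : ℝ) *
              bCondE (a n) (b n) n
                (fun ω => Ysaw (d n) ω.2 ⌈α * Real.log n⌉₊ u v)
                (labelEvent U τ) /
              (sgn (τ u) * sgn (τ v) * (s n) ^ ⌈α * Real.log n⌉₊) - 1|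
            ≤ (n : ℝ) ^ (-1 + δ) := by
  
  intro δ hδ
  refine ⟨1, one_pos, ?_⟩
  set δ' : ℝ := min δ 1 with hδ'def
  have hδ'pos : 0 < δ' := lt_min hδ one_pos
  have hεpos : (0 : ℝ) < δ' / 4 := by positivity
  set C₁ : ℝ := α / (δ' / 4) + 1 with hC₁def
  have hC₁pos : 0 < C₁ := by positivity
  have htend : Filter.Tendsto (fun m : ℕ => (m : ℝ) ^ (δ' / 2)) Filter.atTop Filter.atTop :=
    (tendsto_rpow_atTop (by positivity)).comp tendsto_natCast_atTop_atTop
  obtain ⟨N₀, hN₀⟩ := Filter.eventually_atTop.mp (htend.eventually_ge_atTop (C₁ ^ 2))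
  refine ⟨max N₀ 2, ?_⟩
  intro n hn u v huv U hu hv hUcard τ
  have hn2 : 2 ≤ n := le_trans (le_max_right N₀ 2) hn
  have hnN₀ : N₀ ≤ n := le_trans (le_max_left N₀ 2) hn
  have hnR2 : (2 : ℝ) ≤ (n : ℝ) := by exact_mod_cast hn2
  have hnR1 : (1 : ℝ) ≤ (n : ℝ) := by linarith
  have hnRpos : (0 : ℝ) < (n : ℝ) := by linarith
  set k : ℕ := ⌈α * Real.log n⌉₊ with hkdef
  have hlogpos : 0 < Real.log n := Real.log_pos (by linarith)
  have hkpos : 0 < k := Nat.ceil_pos.mpr (by positivity)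
  have hkR1 : (1 : ℝ) ≤ (k : ℝ) := by exact_mod_cast hkpos
  -- `k` is at most polylogarithmic, hence `k² ≤ n^δ'`
  have hkle : (k : ℝ) ≤ C₁ * (n : ℝ) ^ (δ' / 4) := by
    have h1 : (k : ℝ) < α * Real.log n + 1 := Nat.ceil_lt_add_one (by positivity)
    have h2 : Real.log n ≤ (n : ℝ) ^ (δ' / 4) / (δ' / 4) :=
      Real.log_le_rpow_div (Nat.cast_nonneg n) hεpos
    have h3 : (1 : ℝ) ≤ (n : ℝ) ^ (δ' / 4) := Real.one_le_rpow hnR1 (le_of_lt hεpos)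
    have h4 : α * Real.log n ≤ α / (δ' / 4) * (n : ℝ) ^ (δ' / 4) := by
      rw [div_mul_eq_mul_div, mul_div_assoc]
      exact mul_le_mul_of_nonneg_left h2 (le_of_lt hα)
    calc (k : ℝ) ≤ α * Real.log n + 1 := le_of_lt h1
      _ ≤ α / (δ' / 4) * (n : ℝ) ^ (δ' / 4) + 1 * (n : ℝ) ^ (δ' / 4) := by
          rw [one_mul]; linarith
      _ = C₁ * (n : ℝ) ^ (δ' / 4) := by rw [hC₁def]; ring
  have hk2 : (k : ℝ) ^ 2 ≤ (n : ℝ) ^ (δ' : ℝ) := by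
    have h3 : (0 : ℝ) ≤ (n : ℝ) ^ (δ' / 4) := le_of_lt (Real.rpow_pos_of_pos hnRpos _)
    have h4 : (k : ℝ) ^ 2 ≤ C₁ ^ 2 * ((n : ℝ) ^ (δ' / 4)) ^ 2 := by
      have := mul_le_mul hkle hkle (by positivity) (by positivity)
      calc (k : ℝ) ^ 2 = (k : ℝ) * (k : ℝ) := sq (k:ℝ) ▸ by ring
        _ ≤ (C₁ * (n : ℝ) ^ (δ' / 4)) * (C₁ * (n : ℝ) ^ (δ' / 4)) := this
        _ = C₁ ^ 2 * ((n : ℝ) ^ (δ' / 4)) ^ 2 := by ring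
    have h5 : ((n : ℝ) ^ (δ' / 4)) ^ 2 = (n : ℝ) ^ (δ' / 2) := by
      rw [← Real.rpow_natCast ((n : ℝ) ^ (δ' / 4)) 2, ← Real.rpow_mul (le_of_lt hnRpos)]
      congr 1
      push_cast
      ring
    have h6 : C₁ ^ 2 ≤ (n : ℝ) ^ (δ' / 2) := hN₀ n hnN₀
    have h7 : (0 : ℝ) ≤ (n : ℝ) ^ (δ' / 2) := le_of_lt (Real.rpow_pos_of_pos hnRpos _)
    calc (k : ℝ) ^ 2 ≤ (n : ℝ) ^ (δ' / 2) * (n : ℝ) ^ (δ' / 2) := by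
          rw [h5] at h4; nlinarith
      _ = (n : ℝ) ^ (δ' : ℝ) := by rw [← Real.rpow_add hnRpos]; norm_num
  have hkn : (k : ℝ) ^ 2 ≤ (n : ℝ) := by
    calc (k : ℝ) ^ 2 ≤ (n : ℝ) ^ (δ' : ℝ) := hk2
      _ ≤ (n : ℝ) ^ (1 : ℝ) := Real.rpow_le_rpow_of_exponent_le hnR1 (min_le_right δ 1)
      _ = (n : ℝ) := Real.rpow_one _
  have hkRn : (k : ℝ) ≤ (n : ℝ) := by nlinarith
  have hknNat : k ≤ n := by exact_mod_cast hkRn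
  have hkδ : (k : ℝ) ^ 2 ≤ (n : ℝ) ^ (δ : ℝ) :=
    le_trans hk2 (Real.rpow_le_rpow_of_exponent_le hnR1 (min_le_left δ 1))
  have hs0 : s n ≠ 0 := by
    intro h
    have h2 := hsd n
    rw [h] at h2
    norm_num at h2
    linarith
  -- the conditional expectation
  set A₀ : ℝ := ∑ σ : Fin n → Bool, if (∀ x ∈ U, σ x = τ x) then (1 : ℝ) else 0 with hA₀def
  have hA₀pos : 0 < A₀ := by
    have h1 : (if (∀ x ∈ U, τ x = τ x) then (1 : ℝ) else 0) = 1 := if_pos fun x _ => rfl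
    have h2 : (1 : ℝ) ≤ A₀ := by
      rw [hA₀def]
      have h3 := Finset.single_le_sum
        (f := fun σ : Fin n → Bool => if (∀ x ∈ U, σ x = τ x) then (1 : ℝ) else 0)
        (fun σ _ => by split_ifs <;> norm_num) (Finset.mem_univ τ)
      exact h1.symm.le.trans h3
    linarith
  have hnum : (∑ ω : SampleSpace n, if ω ∈ labelEvent U τ
        then bmass (a n) (b n) n ω * Ysaw (d n) ω.2 k u v else 0)
      = A₀ * ((1 / 2 : ℝ) ^ n * (((Finset.univ.filter fun γ : Fin (k + 1) → Fin n =>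
          IsSAW k γ ∧ pget γ 0 = u ∧ pget γ k = v).card : ℝ)
            * (sgn (τ u) * sgn (τ v) * (s n / n) ^ k))) := by
    show (∑ ω : (Fin n → Bool) × SGraph n, if ω ∈ labelEvent U τ
        then bmass (a n) (b n) n ω * Ysaw (d n) ω.2 k u v else 0) = _
    rw [Fintype.sum_prod_type, hA₀def, Finset.sum_mul]
    refine Finset.sum_congr rfl fun σ _ => ?_
    by_cases hσ : ∀ x ∈ U, σ x = τ x
    · rw [if_pos hσ, one_mul]
      calc (∑ G : SGraph n, if (σ, G) ∈ labelEvent U τ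
              then bmass (a n) (b n) n (σ, G) * Ysaw (d n) (σ, G).2 k u v else 0)
          = ∑ G : SGraph n, (1 / 2 : ℝ) ^ n * (cmass (a n) (b n) σ G * Ysaw (d n) G k u v) := by
            refine Finset.sum_congr rfl fun G _ => ?_
            rw [if_pos (show (σ, G) ∈ labelEvent U τ from hσ)]
            show (1 / 2 : ℝ) ^ n * cmass (a n) (b n) σ G * Ysaw (d n) G k u v = _
            ring
        _ = (1 / 2 : ℝ) ^ n * ∑ G : SGraph n, cmass (a n) (b n) σ G * Ysaw (d n) G k u v :=
            (Finset.mul_sum _ _ _).symm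
        _ = (1 / 2 : ℝ) ^ n * (((Finset.univ.filter fun γ : Fin (k + 1) → Fin n =>
              IsSAW k γ ∧ pget γ 0 = u ∧ pget γ k = v).card : ℝ)
                * (sgn (τ u) * sgn (τ v) * (s n / n) ^ k)) := by
            rw [cE_Ysaw (hs n) (hd n) σ u v hkpos, hσ u hu, hσ v hv]
    · rw [if_neg hσ, zero_mul]
      exact Finset.sum_eq_zero fun G _ =>
        if_neg (fun hc : (σ, G) ∈ labelEvent U τ => hσ hc)
  have hden : bPr (a n) (b n) n (labelEvent U τ) = A₀ * (1 / 2 : ℝ) ^ n := by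
    unfold bPr
    show (∑ ω : (Fin n → Bool) × SGraph n, if ω ∈ labelEvent U τ
        then bmass (a n) (b n) n ω else 0) = _
    rw [Fintype.sum_prod_type, hA₀def, Finset.sum_mul]
    refine Finset.sum_congr rfl fun σ _ => ?_
    by_cases hσ : ∀ x ∈ U, σ x = τ x
    · rw [if_pos hσ, one_mul]
      calc (∑ G : SGraph n, if (σ, G) ∈ labelEvent U τ then bmass (a n) (b n) n (σ, G) else 0)
          = ∑ G : SGraph n, (1 / 2 : ℝ) ^ n * cmass (a n) (b n) σ G :=
            Finset.sum_congr rfl fun G _ => by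
              rw [if_pos (show (σ, G) ∈ labelEvent U τ from hσ)]
              rfl
        _ = (1 / 2 : ℝ) ^ n := by rw [← Finset.mul_sum, cmass_total, mul_one]
    · rw [if_neg hσ, zero_mul]
      exact Finset.sum_eq_zero fun G _ =>
        if_neg (fun hc : (σ, G) ∈ labelEvent U τ => hσ hc)
  have hfinal : bCondE (a n) (b n) n (fun ω => Ysaw (d n) ω.2 k u v) (labelEvent U τ)
      = ((Finset.univ.filter fun γ : Fin (k + 1) → Fin n =>
          IsSAW k γ ∧ pget γ 0 = u ∧ pget γ k = v).card : ℝ)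
            * (sgn (τ u) * sgn (τ v) * (s n / n) ^ k) := by
    unfold bCondE
    rw [hden, hnum]
    set X : ℝ := ((Finset.univ.filter fun γ : Fin (k + 1) → Fin n =>
          IsSAW k γ ∧ pget γ 0 = u ∧ pget γ k = v).card : ℝ)
            * (sgn (τ u) * sgn (τ v) * (s n / n) ^ k) with hXdef
    have h2 : A₀ * ((1 / 2 : ℝ) ^ n * X) = X * (A₀ * (1 / 2 : ℝ) ^ n) := by ring
    rw [h2, mul_div_cancel_right₀ _ (ne_of_gt (by positivity))]
  rw [hfinal]
  -- counting bounds
  set CntR : ℝ := ((Finset.univ.filter fun γ : Fin (k + 1) → Fin n =>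
      IsSAW k γ ∧ pget γ 0 = u ∧ pget γ k = v).card : ℝ) with hCntdef
  have hup : CntR ≤ (n : ℝ) ^ (k - 1) := by
    rw [hCntdef]
    calc ((Finset.univ.filter fun γ : Fin (k + 1) → Fin n =>
        IsSAW k γ ∧ pget γ 0 = u ∧ pget γ k = v).card : ℝ)
        ≤ ((n ^ (k - 1) : ℕ) : ℝ) := by exact_mod_cast count_upper u v hkpos
      _ = (n : ℝ) ^ (k - 1) := by push_cast; ring
  have hlow : ((n : ℝ) - (k : ℝ)) ^ (k - 1) ≤ CntR := by
    have h1 : (n - k) ^ (k - 1) ≤ (n - 2).descFactorial (k - 1) := by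
      have h2 := Nat.pow_sub_le_descFactorial (n - 2) (k - 1)
      have he : n - 2 + 1 - (k - 1) = n - k := by omega
      rwa [he] at h2
    have h3 : ((n - k : ℕ) : ℝ) = (n : ℝ) - (k : ℝ) := by
      push_cast [Nat.cast_sub hknNat]; ring
    calc ((n : ℝ) - (k : ℝ)) ^ (k - 1) = (((n - k : ℕ) : ℝ)) ^ (k - 1) := by rw [h3]
      _ ≤ CntR := by
          rw [hCntdef]
          exact_mod_cast le_trans h1 (count_lower u v huv hkpos)
  -- simplify the ratio
  have hpowpos : (0 : ℝ) < (n : ℝ) ^ (k - 1) := pow_pos hnRpos _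
  have hsimp : (n : ℝ) * (CntR * (sgn (τ u) * sgn (τ v) * (s n / n) ^ k)) /
      (sgn (τ u) * sgn (τ v) * s n ^ k) = CntR / (n : ℝ) ^ (k - 1) := by
    have hnk : (n : ℝ) ^ k = (n : ℝ) ^ (k - 1) * n := by
      rw [← pow_succ]
      congr 1
      omega
    have hgs : sgn (τ u) * sgn (τ v) * s n ^ k ≠ 0 :=
      mul_ne_zero (sgn_mul_ne_zero _ _) (pow_ne_zero _ hs0)
    have e1 : (n : ℝ) * (CntR * (sgn (τ u) * sgn (τ v) * (s n / n) ^ k))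
        = (CntR / (n : ℝ) ^ (k - 1)) * (sgn (τ u) * sgn (τ v) * s n ^ k) := by
      rw [div_pow, hnk]
      field_simp
    rw [e1, mul_div_cancel_right₀ _ hgs]
  rw [hsimp]
  -- numerics
  have hR_up : CntR / (n : ℝ) ^ (k - 1) ≤ 1 := (div_le_one hpowpos).mpr hup
  have hR_low : 1 - (k : ℝ) ^ 2 / n ≤ CntR / (n : ℝ) ^ (k - 1) := by
    have hknn : (0 : ℝ) ≤ (n : ℝ) - k := by linarith
    have hdiv : ((n : ℝ) - k) ^ (k - 1) / (n : ℝ) ^ (k - 1) ≤ CntR / (n : ℝ) ^ (k - 1) :=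
      (div_le_div_iff_of_pos_right hpowpos).mpr hlow
    have hratio : ((n : ℝ) - k) ^ (k - 1) / (n : ℝ) ^ (k - 1)
        = (1 + (-((k : ℝ) / n))) ^ (k - 1) := by
      rw [← div_pow]
      congr 1
      field_simp
      ring
    have hm2 : (-2 : ℝ) ≤ -((k : ℝ) / n) := by
      have : (k : ℝ) / n ≤ 1 := (div_le_one hnRpos).mpr hkRn
      linarith
    have hb := one_add_mul_le_pow hm2 (k - 1)
    have hcast : ((k - 1 : ℕ) : ℝ) ≤ (k : ℝ) := by
      exact_mod_cast Nat.cast_le.mpr (Nat.sub_le k 1)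
    have hkn0 : (0 : ℝ) ≤ (k : ℝ) / n := by positivity
    have h9 : 1 - (k : ℝ) ^ 2 / n ≤ 1 + ((k - 1 : ℕ) : ℝ) * (-((k : ℝ) / n)) := by
      have : ((k - 1 : ℕ) : ℝ) * ((k : ℝ) / n) ≤ (k : ℝ) * ((k : ℝ) / n) :=
        mul_le_mul_of_nonneg_right hcast hkn0
      have h10 : (k : ℝ) * ((k : ℝ) / n) = (k : ℝ) ^ 2 / n := by ring
      linarith [h10 ▸ this]
    calc 1 - (k : ℝ) ^ 2 / n ≤ 1 + ((k - 1 : ℕ) : ℝ) * (-((k : ℝ) / n)) := h9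
      _ ≤ (1 + (-((k : ℝ) / n))) ^ (k - 1) := hb
      _ = ((n : ℝ) - k) ^ (k - 1) / (n : ℝ) ^ (k - 1) := hratio.symm
      _ ≤ CntR / (n : ℝ) ^ (k - 1) := hdiv
  have hrp : (0 : ℝ) < (n : ℝ) ^ (-1 + δ : ℝ) := Real.rpow_pos_of_pos hnRpos _
  have hbound : (k : ℝ) ^ 2 / n ≤ (n : ℝ) ^ (-1 + δ : ℝ) := by
    have he : (n : ℝ) ^ (-1 + δ : ℝ) = (n : ℝ) ^ (δ : ℝ) / n := by
      rw [show (-1 + δ : ℝ) = δ + (-1) by ring, Real.rpow_add hnRpos, Real.rpow_neg_one,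
        div_eq_mul_inv]
    rw [he]
    exact (div_le_div_iff_of_pos_right hnRpos).mpr hkδ
  rw [abs_le]
  constructor
  · linarith
  · linarith
end

section
/- Let G be a graph on n vertices with adjacency matrix A, let D be the diagonal matrix of vertex degrees, I the n×n identity, and 𝟙 the n×n all-ones matrix, and fix a real d. Define N^{(k)} by N^{(0)} = I and N^{(k)}_{u,v} = ∑_{γ ∈ Γ^NB_{k,u,v}} X_γ for k ≥ 1; define Q^{(k,ρ)} = ∑_{j=0}^{⌊k/2⌋} ρ^{2j} N^{(k−2j)} for k ≥ 0 and Q^{(k,ρ)} = 0 for k < 0; define the 4n×4n block matrices M = [[(1−d/n)A, −(1−d/n)²(D−I), −(d/n)(𝟙−A−I), −(d/n)²((n−1)I−D)], [I, 0, 0, 0], [(1−d/n)A, −(1−d/n)²D, −(d/n)(𝟙−A−I), −(d/n)²((n−2)I−D)], [0, 0, I, 0]] and M̂ = [[(1−d/n)A, −(1−d/n)²D, −(d/n)(𝟙−A−I), −(d/n)²((n−1)I−D)], [0,0,0,0], [0,0,0,0], [0,0,0,0]]; and define the 4n×n matrix 𝒬_k whose four n×n blocks, from top to bottom, are Q^{(k,1−d/n)},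 Q^{(k−1,1−d/n)}, Q^{(k,−d/n)}, Q^{(k−1,−d/n)}. Then for every k ≥ 1, M 𝒬_k = 𝒬_{k+1}, and M̂ 𝒬_k equals the 4n×n matrix whose top n×n block is N^{(k+1)} and whose other three blocks are zero. -/
open Filter Finset
open scoped Classical

noncomputable section

/-- Adjacency matrix of a graph. -/
def adjMat {n : ℕ} (G : SGraph n) : Matrix (Fin n) (Fin n) ℝ :=
  Matrix.of fun u v => if adj G u v then 1 else 0

/-- Diagonal matrix of vertex degrees. -/
def degMat {n : ℕ} (G : SGraph n) : Matrix (Fin n) (Fin n) ℝ :=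
  Matrix.diagonal fun u => ((Finset.univ.filter fun v => adj G u v).card : ℝ)

/-- All-ones matrix. -/
def onesMat (n : ℕ) : Matrix (Fin n) (Fin n) ℝ := Matrix.of fun _ _ => 1

/-- The matrix `N^{(k)}` of non-backtracking path weights, with `N^{(0)} = I`. -/
def Nmat {n : ℕ} (d : ℝ) (G : SGraph n) : ℕ → Matrix (Fin n) (Fin n) ℝ
  | 0 => 1
  | (k + 1) => Matrix.of fun u v =>
      ∑ γ : Fin (k + 1 + 1) → Fin n,
        if IsNB (k + 1) γ ∧ pget γ 0 = u ∧ pget γ (k + 1) = v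
        then Xweight d G (k + 1) γ else 0

/-- The matrix `Q^{(k,ρ)} = ∑_{j=0}^{⌊k/2⌋} ρ^{2j} N^{(k-2j)}`, equal to `0` for `k < 0`. -/
def Qmat {n : ℕ} (d : ℝ) (G : SGraph n) (k : ℤ) (ρ : ℝ) : Matrix (Fin n) (Fin n) ℝ :=
  if k < 0 then 0
  else ∑ j ∈ Finset.range (k.toNat / 2 + 1), ρ ^ (2 * j) • Nmat d G (k.toNat - 2 * j)

/-- The `4n × 4n` block matrix `𝓜`. -/
def bigM {n : ℕ} (d : ℝ) (G : SGraph n) :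
    Matrix (Fin 4 × Fin n) (Fin 4 × Fin n) ℝ :=
  Matrix.of fun p q =>
    (![![ (1 - d / n) • adjMat G,
          (-((1 - d / n) ^ 2)) • (degMat G - 1),
          (-(d / n)) • (onesMat n - adjMat G - 1),
          (-((d / n) ^ 2)) • (((n : ℝ) - 1) • (1 : Matrix (Fin n) (Fin n) ℝ) - degMat G)],
       ![ (1 : Matrix (Fin n) (Fin n) ℝ), 0, 0, 0],
       ![ (1 - d / n) • adjMat G,
          (-((1 - d / n) ^ 2)) • degMat G,
          (-(d / n)) • (onesMat n - adjMat G - 1),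
          (-((d / n) ^ 2)) • (((n : ℝ) - 2) • (1 : Matrix (Fin n) (Fin n) ℝ) - degMat G)],
       ![ 0, 0, (1 : Matrix (Fin n) (Fin n) ℝ), 0]] :
      Fin 4 → Fin 4 → Matrix (Fin n) (Fin n) ℝ) p.1 q.1 p.2 q.2

/-- The `4n × 4n` block matrix `𝓜̂`. -/
def bigMhat {n : ℕ} (d : ℝ) (G : SGraph n) :
    Matrix (Fin 4 × Fin n) (Fin 4 × Fin n) ℝ :=
  Matrix.of fun p q =>
    (![![ (1 - d / n) • adjMat G,
          (-((1 - d / n) ^ 2)) • degMat G,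
          (-(d / n)) • (onesMat n - adjMat G - 1),
          (-((d / n) ^ 2)) • (((n : ℝ) - 1) • (1 : Matrix (Fin n) (Fin n) ℝ) - degMat G)],
       ![0, 0, 0, 0], ![0, 0, 0, 0], ![0, 0, 0, 0]] :
      Fin 4 → Fin 4 → Matrix (Fin n) (Fin n) ℝ) p.1 q.1 p.2 q.2

/-- The `4n × n` matrix `𝒬_k` with blocks `Q^{(k,1-d/n)}, Q^{(k-1,1-d/n)},
`Q^{(k,-d/n)}, Q^{(k-1,-d/n)}` from top to bottom. -/
def bigQ {n : ℕ} (d : ℝ) (G : SGraph n) (k : ℤ) : Matrix (Fin 4 × Fin n) (Fin n) ℝ :=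
  Matrix.of fun p y =>
    (![Qmat d G k (1 - d / n), Qmat d G (k - 1) (1 - d / n),
       Qmat d G k (-(d / n)), Qmat d G (k - 1) (-(d / n))] :
      Fin 4 → Matrix (Fin n) (Fin n) ℝ) p.1 p.2 y

end

noncomputable section MyAux

namespace MyNB

variable {n : ℕ}

lemma pget_zero {β : Type*} {k : ℕ} (γ : Fin (k+1) → β) : pget γ 0 = γ 0 := by
  unfold pget
  congr 1

lemma pget_cons_zero {β : Type*} {k : ℕ} (x : β) (δ : Fin (k+1) → β) :
    pget (Fin.cons x δ : Fin (k+2) → β) 0 = x := by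
  rw [pget_zero, Fin.cons_zero]

lemma pget_cons_succ {β : Type*} {k : ℕ} (x : β) (δ : Fin (k+1) → β) (i : ℕ) :
    pget (Fin.cons x δ : Fin (k+2) → β) (i+1) = pget δ i := by
  unfold pget
  have h : min (i+1) (k+1) = min i k + 1 := by omega
  have : (⟨min (i+1) (k+1), by omega⟩ : Fin (k+2)) =
      Fin.succ ⟨min i k, by omega⟩ := by
    ext; simp [h]
  rw [this, Fin.cons_succ]

lemma pget_one_zero {β : Type*} (γ : Fin 1 → β) : pget γ 1 = pget γ 0 := by
  unfold pget; rfl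

lemma isNB_cons {k : ℕ} (x : Fin n) (δ : Fin (k+1) → Fin n) :
    IsNB (k+1) (Fin.cons x δ : Fin (k+2) → Fin n) ↔
      (x ≠ pget δ 0 ∧ x ≠ pget δ 1 ∧ IsNB k δ) := by
  constructor
  · rintro ⟨hp, hnb⟩
    have h0 : x ≠ pget δ 0 := by
      have := hp 0 (by omega)
      rwa [pget_cons_zero, pget_cons_succ] at this
    refine ⟨h0, ?_, ?_, ?_⟩
    · rcases Nat.eq_zero_or_pos k with hk | hk
      · subst hk
        rwa [pget_one_zero]
      · have := hnb 0 (by omega)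
        rwa [pget_cons_zero, pget_cons_succ] at this
    · intro i hi
      have := hp (i+1) (by omega)
      rwa [pget_cons_succ, pget_cons_succ] at this
    · intro i hi
      have := hnb (i+1) (by omega)
      rwa [pget_cons_succ, pget_cons_succ] at this
  · rintro ⟨h0, h1, hp, hnb⟩
    constructor
    · intro i hi
      match i with
      | 0 => rwa [pget_cons_zero, pget_cons_succ]
      | (j+1) =>
          rw [pget_cons_succ, pget_cons_succ]
          exact hp j (by omega)
    · intro i hi
      match i with
      | 0 => rwa [pget_cons_zero, pget_cons_succ]
      | (j+1) =>
          rw [pget_cons_succ, pget_cons_succ]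
          exact hnb j (by omega)

variable (d : ℝ) (G : SGraph n)

lemma Xweight_cons {k : ℕ} (x : Fin n) (δ : Fin (k+1) → Fin n) :
    Xweight d G (k+1) (Fin.cons x δ : Fin (k+2) → Fin n) =
      W d G x (pget δ 0) * Xweight d G k δ := by
  unfold Xweight
  rw [Finset.prod_range_succ']
  rw [mul_comm]
  congr 1
  · apply Finset.prod_congr rfl
    intro i _
    rw [pget_cons_succ, pget_cons_succ]

lemma adj_symm (u v : Fin n) : adj G u v = adj G v u := by
  unfold adj
  rcases lt_trichotomy u v with h | h | h
  · rw [dif_pos h, dif_neg (by omega), dif_pos h]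
  · subst h; rfl
  · rw [dif_neg (by omega), dif_pos h, dif_pos h]

lemma adj_self (u : Fin n) : adj G u u = false := by
  unfold adj
  rw [dif_neg (by omega), dif_neg (by omega)]

lemma W_symm (u v : Fin n) : W d G u v = W d G v u := by
  unfold W; rw [adj_symm]

end MyNB
end MyAux

noncomputable section MyAux2
namespace MyNB

variable {n : ℕ} (d : ℝ) (G : SGraph n)

lemma sum_decomp {k : ℕ} (f : (Fin (k+2) → Fin n) → ℝ) :
    ∑ γ : Fin (k+2) → Fin n, f γ =
      ∑ x : Fin n, ∑ δ : Fin (k+1) → Fin n, f (Fin.cons x δ) := by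
  rw [← Equiv.sum_comp (Fin.consEquiv (fun _ : Fin (k+2) => Fin n)) f,
    Fintype.sum_prod_type]
  rfl

lemma Nnb_zero (x y : Fin n) : Nnb d G 0 x y = if x = y then 1 else 0 := by
  unfold Nnb
  rw [← Equiv.sum_comp (Equiv.funUnique (Fin 1) (Fin n)).symm]
  have h1 : ∀ z : Fin n,
      (if IsNB 0 ((Equiv.funUnique (Fin 1) (Fin n)).symm z) ∧
          pget ((Equiv.funUnique (Fin 1) (Fin n)).symm z) 0 = x ∧
          pget ((Equiv.funUnique (Fin 1) (Fin n)).symm z) 0 = y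
        then Xweight d G 0 ((Equiv.funUnique (Fin 1) (Fin n)).symm z) else 0) =
      if z = x ∧ z = y then 1 else 0 := by
    intro z
    have hnb : IsNB 0 ((Equiv.funUnique (Fin 1) (Fin n)).symm z) :=
      ⟨fun i hi => absurd hi (Nat.not_lt_zero i), fun i hi => by omega⟩
    have hp : pget ((Equiv.funUnique (Fin 1) (Fin n)).symm z) 0 = z := rfl
    have hx : Xweight d G 0 ((Equiv.funUnique (Fin 1) (Fin n)).symm z) = 1 :=
      Finset.prod_range_zero _
    rw [hp, hx]
    by_cases h : z = x ∧ z = y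
    · rw [if_pos ⟨hnb, h.1, h.2⟩, if_pos h]
    · rw [if_neg (by tauto), if_neg h]
  rw [Finset.sum_congr rfl fun z _ => h1 z]
  by_cases hxy : x = y
  · subst hxy
    simp
  · rw [if_neg hxy]
    apply Finset.sum_eq_zero
    intro z _
    rw [if_neg (by rintro ⟨rfl, rfl⟩; exact hxy rfl)]

lemma Nmat_apply (s : ℕ) (x y : Fin n) : Nmat d G s x y = Nnb d G s x y := by
  cases s with
  | zero => rw [Nnb_zero]; rfl
  | succ m => rfl

/-- `a_r(x)`: NB paths of length `r` from `x` to `v` with second vertex `≠ u`,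
restricted to `x ≠ u`. -/
def aa (u v : Fin n) (r : ℕ) (x : Fin n) : ℝ :=
  ∑ γ : Fin (r+1) → Fin n,
    if IsNB r γ ∧ pget γ 0 = x ∧ pget γ r = v ∧ x ≠ u ∧ pget γ 1 ≠ u
    then Xweight d G r γ else 0

def bb (u v : Fin n) (r : ℕ) (x : Fin n) : ℝ :=
  ∑ γ : Fin (r+1) → Fin n,
    if IsNB r γ ∧ pget γ 0 = x ∧ pget γ r = v ∧ x ≠ u ∧ pget γ 1 = u
    then Xweight d G r γ else 0

def dd (u v : Fin n) (s : ℕ) (x : Fin n) : ℝ :=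
  ∑ γ : Fin (s+1) → Fin n,
    if IsNB s γ ∧ pget γ 0 = u ∧ pget γ s = v ∧ x ≠ u ∧ pget γ 1 = x
    then Xweight d G s γ else 0

def Qe (s : ℕ) (ρ : ℝ) (x y : Fin n) : ℝ :=
  ∑ j ∈ Finset.range (s/2+1), ρ^(2*j) * Nnb d G (s - 2*j) x y

lemma Qe_zero (ρ : ℝ) (x y : Fin n) : Qe d G 0 ρ x y = Nnb d G 0 x y := by
  unfold Qe; simp

lemma Qe_one (ρ : ℝ) (x y : Fin n) : Qe d G 1 ρ x y = Nnb d G 1 x y := by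
  unfold Qe; simp

lemma Qe_rec (s : ℕ) (ρ : ℝ) (x y : Fin n) :
    Qe d G (s+2) ρ x y = Nnb d G (s+2) x y + ρ^2 * Qe d G s ρ x y := by
  unfold Qe
  have h : (s+2)/2 + 1 = (s/2 + 1) + 1 := by omega
  rw [h, Finset.sum_range_succ', add_comm]
  congr 1
  · simp
  · rw [Finset.mul_sum]
    apply Finset.sum_congr rfl
    intro j _
    have h1 : 2*(j+1) = 2*j + 2 := by ring
    have h2 : s+2-(2*j+2) = s - 2*j := by omega
    rw [h1, h2, pow_add]
    ring

lemma split_aa_bb (u v : Fin n) (r : ℕ) (x : Fin n) :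
    aa d G u v r x + bb d G u v r x = if x ≠ u then Nnb d G r x v else 0 := by
  unfold aa bb Nnb
  rw [← Finset.sum_add_distrib]
  by_cases hxu : x ≠ u
  · rw [if_pos hxu]
    apply Finset.sum_congr rfl
    intro γ _
    by_cases hb : IsNB r γ ∧ pget γ 0 = x ∧ pget γ r = v
    · by_cases h1 : pget γ 1 = u
      · rw [if_neg (by tauto), if_pos (by tauto), if_pos hb, zero_add]
      · rw [if_pos (by tauto), if_neg (by tauto), if_pos hb, add_zero]
    · rw [if_neg (by tauto), if_neg (by tauto), if_neg hb, add_zero]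
  · rw [if_neg hxu]
    apply Finset.sum_eq_zero
    intro γ _
    rw [if_neg (by tauto), if_neg (by tauto), add_zero]

lemma bb_zero (u v : Fin n) (x : Fin n) : bb d G u v 0 x = 0 := by
  unfold bb
  apply Finset.sum_eq_zero
  intro γ _
  apply if_neg
  rintro ⟨-, h0, -, hxu, h1⟩
  rw [pget_one_zero, h0] at h1
  exact hxu h1

lemma aa_zero (u v : Fin n) (x : Fin n) :
    aa d G u v 0 x = if x ≠ u then Nnb d G 0 x v else 0 := by
  have h := split_aa_bb d G u v 0 x
  rwa [bb_zero, add_zero] at h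

lemma dd_zero (u v : Fin n) (x : Fin n) : dd d G u v 0 x = 0 := by
  unfold dd
  apply Finset.sum_eq_zero
  intro γ _
  apply if_neg
  rintro ⟨-, h0, -, hxu, h1⟩
  rw [pget_one_zero, h0] at h1
  exact hxu h1.symm

end MyNB
end MyAux2

noncomputable section MyAux3
namespace MyNB

variable {n : ℕ} (d : ℝ) (G : SGraph n)

lemma dd_succ (u v : Fin n) (s : ℕ) (x : Fin n) :
    dd d G u v (s+1) x = W d G u x * aa d G u v s x := by
  unfold dd aa
  rw [sum_decomp]
  rw [Finset.sum_eq_single u]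
  · rw [Finset.mul_sum]
    apply Finset.sum_congr rfl
    intro δ _
    simp only [isNB_cons, pget_cons_zero, pget_cons_succ, Xweight_cons]
    by_cases hc : IsNB s δ ∧ pget δ 0 = x ∧ pget δ s = v ∧ x ≠ u ∧ pget δ 1 ≠ u
    · obtain ⟨h1, h2, h3, h4, h5⟩ := hc
      have hne : u ≠ pget δ 0 := by rw [h2]; exact fun h => h4 h.symm
      have hne1 : u ≠ pget δ 1 := fun h => h5 h.symm
      rw [if_pos ⟨⟨hne, hne1, h1⟩, trivial, h3, h4, h2⟩, if_pos ⟨h1, h2, h3, h4, h5⟩, h2]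
    · rw [if_neg, if_neg hc, mul_zero]
      rintro ⟨⟨hne, hne1, h1⟩, -, h3, h4, h2⟩
      exact hc ⟨h1, h2, h3, h4, fun h => hne1 h.symm⟩
  · intro y _ hy
    apply Finset.sum_eq_zero
    intro δ _
    apply if_neg
    rintro ⟨-, h0, -⟩
    rw [pget_cons_zero] at h0
    exact hy h0
  · intro h
    exact absurd (Finset.mem_univ u) h

lemma bb_succ (u v : Fin n) (r : ℕ) (x : Fin n) :
    bb d G u v (r+1) x =
      W d G u x * ((if x ≠ u then Nnb d G r u v else 0) - dd d G u v r x) := by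
  unfold bb
  rw [sum_decomp]
  rw [Finset.sum_eq_single x]
  · have key : ∑ δ : Fin (r+1) → Fin n,
        (if IsNB (r+1) (Fin.cons x δ : Fin (r+2) → Fin n) ∧
            pget (Fin.cons x δ : Fin (r+2) → Fin n) 0 = x ∧
            pget (Fin.cons x δ : Fin (r+2) → Fin n) (r+1) = v ∧ x ≠ u ∧
            pget (Fin.cons x δ : Fin (r+2) → Fin n) 1 = u
          then Xweight d G (r+1) (Fin.cons x δ : Fin (r+2) → Fin n) else 0) =
        W d G u x * ∑ δ : Fin (r+1) → Fin n,
          (if IsNB r δ ∧ pget δ 0 = u ∧ pget δ r = v ∧ x ≠ u ∧ pget δ 1 ≠ x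
            then Xweight d G r δ else 0) := by
      rw [Finset.mul_sum]
      apply Finset.sum_congr rfl
      intro δ _
      simp only [isNB_cons, pget_cons_zero, pget_cons_succ, Xweight_cons]
      by_cases hc : IsNB r δ ∧ pget δ 0 = u ∧ pget δ r = v ∧ x ≠ u ∧ pget δ 1 ≠ x
      · obtain ⟨h1, h2, h3, h4, h5⟩ := hc
        have hne : x ≠ pget δ 0 := by rw [h2]; exact h4
        have hne1 : x ≠ pget δ 1 := fun h => h5 h.symm
        rw [if_pos ⟨⟨hne, hne1, h1⟩, trivial, h3, h4, h2⟩, if_pos ⟨h1, h2, h3, h4, h5⟩,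
          h2, W_symm]
      · rw [if_neg, if_neg hc, mul_zero]
        rintro ⟨⟨hne, hne1, h1⟩, -, h3, h4, h2⟩
        exact hc ⟨h1, h2, h3, h4, fun h => hne1 h.symm⟩
    rw [key]
    congr 1
    -- inner sum = (if x ≠ u then Nnb r u v else 0) - dd r x
    unfold dd Nnb
    rw [eq_sub_iff_add_eq, ← Finset.sum_add_distrib]
    by_cases hxu : x ≠ u
    · rw [if_pos hxu]
      apply Finset.sum_congr rfl
      intro δ _
      by_cases hb : IsNB r δ ∧ pget δ 0 = u ∧ pget δ r = v
      · by_cases h1 : pget δ 1 = x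
        · rw [if_neg (by tauto), if_pos (by tauto), if_pos hb, zero_add]
        · rw [if_pos (by tauto), if_neg (by tauto), if_pos hb, add_zero]
      · rw [if_neg (by tauto), if_neg (by tauto), if_neg hb, add_zero]
    · rw [if_neg hxu]
      apply Finset.sum_eq_zero
      intro δ _
      rw [if_neg (by tauto), if_neg (by tauto), add_zero]
  · intro y _ hy
    apply Finset.sum_eq_zero
    intro δ _
    apply if_neg
    rintro ⟨-, h0, -⟩
    rw [pget_cons_zero] at h0
    exact hy h0
  · intro h
    exact absurd (Finset.mem_univ x) h

lemma ext_lemma (u v : Fin n) (r : ℕ) :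
    Nnb d G (r+1) u v = ∑ x : Fin n, W d G u x * aa d G u v r x := by
  have haa : ∀ x, W d G u x * aa d G u v r x =
      ∑ δ : Fin (r+1) → Fin n,
        (if IsNB r δ ∧ pget δ 0 = x ∧ pget δ r = v ∧ x ≠ u ∧ pget δ 1 ≠ u
          then W d G u (pget δ 0) * Xweight d G r δ else 0) := by
    intro x
    unfold aa
    rw [Finset.mul_sum]
    apply Finset.sum_congr rfl
    intro δ _
    by_cases hc : IsNB r δ ∧ pget δ 0 = x ∧ pget δ r = v ∧ x ≠ u ∧ pget δ 1 ≠ u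
    · rw [if_pos hc, if_pos hc, hc.2.1]
    · rw [if_neg hc, if_neg hc, mul_zero]
  rw [Finset.sum_congr rfl fun x _ => haa x, Finset.sum_comm]
  unfold Nnb
  rw [sum_decomp]
  rw [Finset.sum_eq_single u]
  · apply Finset.sum_congr rfl
    intro δ _
    simp only [isNB_cons, pget_cons_zero, pget_cons_succ, Xweight_cons]
    rw [Finset.sum_eq_single (pget δ 0)]
    · by_cases hc : IsNB r δ ∧ pget δ r = v ∧ pget δ 0 ≠ u ∧ pget δ 1 ≠ u
      · obtain ⟨h1, h3, h4, h5⟩ := hc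
        rw [if_pos ⟨⟨fun h => h4 h.symm, fun h => h5 h.symm, h1⟩, trivial, h3⟩,
          if_pos ⟨h1, rfl, h3, h4, h5⟩]
      · rw [if_neg, if_neg]
        · rintro ⟨h1, -, h3, h4, h5⟩
          exact hc ⟨h1, h3, h4, h5⟩
        · rintro ⟨⟨hne, hne1, h1⟩, -, h3⟩
          exact hc ⟨h1, h3, fun h => hne h.symm, fun h => hne1 h.symm⟩
    · intro y _ hy
      apply if_neg
      rintro ⟨-, h0, -⟩
      exact hy h0.symm
    · intro h
      exact absurd (Finset.mem_univ _) h
  · intro y _ hy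
    apply Finset.sum_eq_zero
    intro δ _
    apply if_neg
    rintro ⟨-, h0, -⟩
    rw [pget_cons_zero] at h0
    exact hy h0
  · intro h
    exact absurd (Finset.mem_univ u) h

end MyNB
end MyAux3

noncomputable section MyAux4
namespace MyNB

variable {n : ℕ} (d : ℝ) (G : SGraph n)

lemma aa_one (u v : Fin n) (x : Fin n) :
    aa d G u v 1 x =
      if x ≠ u then Nnb d G 1 x v - W d G u x * Nnb d G 0 u v else 0 := by
  have h := split_aa_bb d G u v 1 x
  rw [bb_succ, dd_zero, sub_zero] at h
  by_cases hxu : x ≠ u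
  · rw [if_pos hxu]
    rw [if_pos hxu, if_pos hxu] at h
    linarith
  · rw [if_neg hxu]
    rw [if_neg hxu, if_neg hxu, mul_zero, add_zero] at h
    exact h

lemma aa_rec (u v : Fin n) (r : ℕ) (x : Fin n) :
    aa d G u v (r+2) x =
      (if x ≠ u then Nnb d G (r+2) x v - W d G u x * Nnb d G (r+1) u v else 0) +
        (W d G u x)^2 * aa d G u v r x := by
  have h := split_aa_bb d G u v (r+2) x
  rw [bb_succ, dd_succ] at h
  by_cases hxu : x ≠ u
  · rw [if_pos hxu]
    rw [if_pos hxu, if_pos hxu] at h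
    have := h
    ring_nf
    ring_nf at this
    linarith
  · rw [if_neg hxu]
    rw [if_neg hxu, if_neg hxu] at h
    have haa0 : aa d G u v r x = 0 := by
      unfold aa
      apply Finset.sum_eq_zero
      intro γ _
      exact if_neg (by tauto)
    rw [haa0, mul_zero, zero_add]
    rw [haa0] at h
    linarith

lemma P_lemma (u v : Fin n) :
    ∀ r, 1 ≤ r → ∀ x, aa d G u v r x =
      if x ≠ u then
        Qe d G r (W d G u x) x v - W d G u x * Qe d G (r-1) (W d G u x) u v
      else 0 := by
  intro r
  induction r using Nat.strong_induction_on with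
  | _ r IH =>
    intro hr x
    match r, hr with
    | 1, _ =>
        rw [aa_one, Qe_one, Qe_zero]
    | 2, _ =>
        rw [aa_rec, aa_zero]
        have h2 : Qe d G 2 (W d G u x) x v =
            Nnb d G 2 x v + (W d G u x)^2 * Qe d G 0 (W d G u x) x v :=
          Qe_rec d G 0 (W d G u x) x v
        by_cases hxu : x ≠ u
        · rw [if_pos hxu, if_pos hxu, if_pos hxu, h2, Qe_zero, Qe_one]
          ring
        · rw [if_neg hxu, if_neg hxu, if_neg hxu, mul_zero, add_zero]
    | (m+3), _ =>
        have hm : 1 ≤ m + 1 := by omega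
        have IH1 := IH (m+1) (by omega) hm x
        rw [show m + 3 = (m+1) + 2 by omega, aa_rec, IH1]
        have hQ1 : Qe d G ((m+1)+2) (W d G u x) x v =
            Nnb d G ((m+1)+2) x v + (W d G u x)^2 * Qe d G (m+1) (W d G u x) x v :=
          Qe_rec d G (m+1) (W d G u x) x v
        have hQ2 : Qe d G (m+2) (W d G u x) u v =
            Nnb d G (m+2) u v + (W d G u x)^2 * Qe d G m (W d G u x) u v :=
          Qe_rec d G m (W d G u x) u v
        by_cases hxu : x ≠ u
        · rw [if_pos hxu, if_pos hxu, if_pos hxu]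
          have e1 : (m+1) + 2 - 1 = m + 2 := by omega
          have e2 : m + 1 - 1 = m := by omega
          rw [e1, e2, hQ1, hQ2]
          ring
        · rw [if_neg hxu, if_neg hxu, if_neg hxu, mul_zero, add_zero]

lemma core (u v : Fin n) (k : ℕ) (hk : 1 ≤ k) :
    Nnb d G (k+1) u v =
      ∑ x : Fin n,
        (if x = u then 0 else
          W d G u x * Qe d G k (W d G u x) x v -
            (W d G u x)^2 * Qe d G (k-1) (W d G u x) u v) := by
  rw [ext_lemma]
  apply Finset.sum_congr rfl
  intro x _
  rw [P_lemma d G u v k hk x]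
  by_cases hxu : x ≠ u
  · rw [if_pos hxu, if_neg (by tauto)]
    ring
  · rw [if_neg hxu, if_pos (by tauto), mul_zero]

end MyNB
end MyAux4

noncomputable section MyAux5
namespace MyNB

variable {n : ℕ} (d : ℝ) (G : SGraph n)

/-- degree of `u` -/
def degc (u : Fin n) : ℕ := (Finset.univ.filter fun x => adj G u x).card

lemma W_adj (u x : Fin n) (h : adj G u x = true) : W d G u x = 1 - d / n := by
  unfold W; rw [if_pos h]

lemma W_nadj (u x : Fin n) (h : ¬ adj G u x = true) : W d G u x = -(d / n) := by
  unfold W; rw [if_neg h]; ring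

lemma sum_A_ind (u : Fin n) :
    ∑ x : Fin n, (if adj G u x then (1:ℝ) else 0) = (degc G u : ℝ) := by
  rw [Finset.sum_boole]
  rfl

lemma degc_le (u : Fin n) : degc G u ≤ n - 1 := by
  have h1 : (Finset.univ.filter fun x => adj G u x) ⊆ Finset.univ.erase u := by
    intro x hx
    rw [Finset.mem_filter] at hx
    apply Finset.mem_erase.2
    refine ⟨?_, Finset.mem_univ x⟩
    rintro rfl
    rw [adj_self] at hx
    simp at hx
  have h2 := Finset.card_le_card h1
  rw [Finset.card_erase_of_mem (Finset.mem_univ u), Finset.card_univ, Fintype.card_fin] at h2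
  exact h2

lemma sum_O_ind (u : Fin n) :
    ∑ x : Fin n, (if x = u ∨ adj G u x then (0:ℝ) else 1) =
      (n : ℝ) - 1 - (degc G u : ℝ) := by
  have hpt : ∀ x : Fin n, (if x = u ∨ adj G u x then (0:ℝ) else 1) =
      1 - (if x = u then (1:ℝ) else 0) - (if adj G u x then (1:ℝ) else 0) := by
    intro x
    by_cases hx : x = u
    · subst hx
      rw [if_pos (Or.inl rfl), if_pos rfl, adj_self]
      norm_num
    · by_cases ha : adj G u x
      · rw [if_pos (Or.inr ha), if_neg hx, if_pos ha]; norm_num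
      · rw [if_neg (by tauto), if_neg hx, if_neg ha]; norm_num
  rw [Finset.sum_congr rfl fun x _ => hpt x]
  rw [Finset.sum_sub_distrib, Finset.sum_sub_distrib, sum_A_ind]
  have h1 : ∑ _x : Fin n, (1:ℝ) = n := by
    rw [Finset.sum_const, Finset.card_univ, Fintype.card_fin, nsmul_eq_mul, mul_one]
  have h2 : ∑ x : Fin n, (if x = u then (1:ℝ) else 0) = 1 := by
    rw [Finset.sum_ite_eq' Finset.univ u (fun _ => (1:ℝ))]
    rw [if_pos (Finset.mem_univ u)]
  rw [h1, h2]

/-- The split form of the core identity. -/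
lemma core' (u v : Fin n) (k : ℕ) (hk : 1 ≤ k) :
    Nnb d G (k+1) u v =
      (∑ x : Fin n, (if adj G u x then (1:ℝ) else 0) *
          ((1 - d/n) * Qe d G k (1 - d/n) x v)) +
      (∑ x : Fin n, (if x = u ∨ adj G u x then (0:ℝ) else 1) *
          (-(d/n) * Qe d G k (-(d/n)) x v)) -
      (1 - d/n)^2 * (degc G u : ℝ) * Qe d G (k-1) (1 - d/n) u v -
      (d/n)^2 * ((n:ℝ) - 1 - (degc G u : ℝ)) * Qe d G (k-1) (-(d/n)) u v := by
  rw [core d G u v k hk]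
  have hpt : ∀ x : Fin n,
      (if x = u then 0 else
        W d G u x * Qe d G k (W d G u x) x v -
          (W d G u x)^2 * Qe d G (k-1) (W d G u x) u v) =
      (if adj G u x then (1:ℝ) else 0) * ((1 - d/n) * Qe d G k (1 - d/n) x v) +
      (if x = u ∨ adj G u x then (0:ℝ) else 1) * (-(d/n) * Qe d G k (-(d/n)) x v) -
      (if adj G u x then (1:ℝ) else 0) * ((1 - d/n)^2 * Qe d G (k-1) (1 - d/n) u v) -
      (if x = u ∨ adj G u x then (0:ℝ) else 1) *
        ((d/n)^2 * Qe d G (k-1) (-(d/n)) u v) := by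
    intro x
    by_cases hx : x = u
    · subst hx
      rw [if_pos rfl, adj_self]
      simp
    · rw [if_neg hx]
      by_cases ha : adj G u x
      · rw [if_pos ha, if_pos (Or.inr ha), W_adj d G u x ha]
        ring
      · rw [if_neg ha, if_neg (by tauto), W_nadj d G u x ha]
        ring
  rw [Finset.sum_congr rfl fun x _ => hpt x]
  rw [Finset.sum_sub_distrib, Finset.sum_sub_distrib, Finset.sum_add_distrib]
  rw [← Finset.sum_mul, ← Finset.sum_mul, sum_A_ind, sum_O_ind]
  ring

lemma Qmat_apply (k : ℤ) (hk : 0 ≤ k) (ρ : ℝ) (x y : Fin n) :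
    Qmat d G k ρ x y = Qe d G k.toNat ρ x y := by
  unfold Qmat Qe
  rw [if_neg (by omega)]
  rw [Matrix.sum_apply]
  apply Finset.sum_congr rfl
  intro j _
  rw [Matrix.smul_apply, smul_eq_mul, Nmat_apply]

end MyNB
end MyAux5

noncomputable section MyAux6
namespace MyNB

variable {n : ℕ} (d : ℝ) (G : SGraph n)

lemma T1 (c ρ : ℝ) (s : ℤ) (hs : 0 ≤ s) (u v : Fin n) :
    ∑ x : Fin n, (c • adjMat G) u x * Qmat d G s ρ x v =
      ∑ x : Fin n, (if adj G u x then (1:ℝ) else 0) * (c * Qe d G s.toNat ρ x v) := by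
  apply Finset.sum_congr rfl
  intro x _
  rw [Matrix.smul_apply, smul_eq_mul, Qmat_apply d G s hs]
  show c * (if adj G u x then (1:ℝ) else 0) * _ = _
  ring

lemma T3 (c ρ : ℝ) (s : ℤ) (hs : 0 ≤ s) (u v : Fin n) :
    ∑ x : Fin n, (c • (onesMat n - adjMat G - 1)) u x * Qmat d G s ρ x v =
      ∑ x : Fin n, (if x = u ∨ adj G u x then (0:ℝ) else 1) * (c * Qe d G s.toNat ρ x v) := by
  apply Finset.sum_congr rfl
  intro x _
  rw [Matrix.smul_apply, smul_eq_mul, Qmat_apply d G s hs]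
  rw [Matrix.sub_apply, Matrix.sub_apply]
  show c * (1 - (if adj G u x then (1:ℝ) else 0) - (1 : Matrix (Fin n) (Fin n) ℝ) u x) * _ = _
  rw [Matrix.one_apply]
  by_cases hx : x = u
  · subst hx
    rw [if_pos rfl, adj_self, if_pos (Or.inl rfl)]
    norm_num
  · by_cases ha : adj G u x
    · rw [if_pos ha, if_neg (fun h => hx h.symm), if_pos (Or.inr ha)]
      norm_num
    · rw [if_neg ha, if_neg (fun h => hx h.symm), if_neg (by tauto)]
      ring

lemma T2 (c ρ : ℝ) (s : ℤ) (hs : 0 ≤ s) (u v : Fin n) :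
    ∑ x : Fin n, (c • (degMat G - 1)) u x * Qmat d G s ρ x v =
      c * ((degc G u : ℝ) - 1) * Qe d G s.toNat ρ u v := by
  rw [Finset.sum_eq_single u]
  · rw [Matrix.smul_apply, smul_eq_mul, Qmat_apply d G s hs, Matrix.sub_apply]
    unfold degMat degc
    rw [Matrix.diagonal_apply_eq, Matrix.one_apply_eq]
    try ring
  · intro x _ hx
    rw [Matrix.smul_apply, smul_eq_mul, Matrix.sub_apply]
    unfold degMat
    rw [Matrix.diagonal_apply_ne _ (fun h => hx h.symm),
      Matrix.one_apply_ne (fun h => hx h.symm)]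
    try ring_nf
    try simp
  · intro h
    exact absurd (Finset.mem_univ u) h

lemma T2d (c ρ : ℝ) (s : ℤ) (hs : 0 ≤ s) (u v : Fin n) :
    ∑ x : Fin n, (c • degMat G) u x * Qmat d G s ρ x v =
      c * (degc G u : ℝ) * Qe d G s.toNat ρ u v := by
  rw [Finset.sum_eq_single u]
  · rw [Matrix.smul_apply, smul_eq_mul, Qmat_apply d G s hs]
    unfold degMat degc
    rw [Matrix.diagonal_apply_eq]
    try ring
  · intro x _ hx
    rw [Matrix.smul_apply, smul_eq_mul]
    unfold degMat
    rw [Matrix.diagonal_apply_ne _ (fun h => hx h.symm)]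
    try ring
    try simp
  · intro h
    exact absurd (Finset.mem_univ u) h

lemma T4 (c a ρ : ℝ) (s : ℤ) (hs : 0 ≤ s) (u v : Fin n) :
    ∑ x : Fin n, (c • (a • (1 : Matrix (Fin n) (Fin n) ℝ) - degMat G)) u x *
        Qmat d G s ρ x v =
      c * (a - (degc G u : ℝ)) * Qe d G s.toNat ρ u v := by
  rw [Finset.sum_eq_single u]
  · rw [Matrix.smul_apply, smul_eq_mul, Qmat_apply d G s hs, Matrix.sub_apply,
      Matrix.smul_apply, smul_eq_mul, Matrix.one_apply_eq]
    unfold degMat degc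
    rw [Matrix.diagonal_apply_eq]
    try ring
  · intro x _ hx
    rw [Matrix.smul_apply, smul_eq_mul, Matrix.sub_apply, Matrix.smul_apply,
      smul_eq_mul, Matrix.one_apply_ne (fun h => hx h.symm)]
    unfold degMat
    rw [Matrix.diagonal_apply_ne _ (fun h => hx h.symm)]
    try ring
    try simp
  · intro h
    exact absurd (Finset.mem_univ u) h

lemma T5 (f : Fin n → ℝ) (u : Fin n) :
    ∑ x : Fin n, (1 : Matrix (Fin n) (Fin n) ℝ) u x * f x = f u := by
  rw [Finset.sum_eq_single u]
  · rw [Matrix.one_apply_eq, one_mul]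
  · intro x _ hx
    rw [Matrix.one_apply_ne (fun h => hx h.symm), zero_mul]
  · intro h
    exact absurd (Finset.mem_univ u) h

lemma T6 (f : Fin n → ℝ) (u : Fin n) :
    ∑ x : Fin n, (0 : Matrix (Fin n) (Fin n) ℝ) u x * f x = 0 := by
  apply Finset.sum_eq_zero
  intro x _
  rw [Matrix.zero_apply, zero_mul]

end MyNB
end MyAux6
/-- The recursions `𝓜 𝒬_k = 𝒬_{k+1}` and
`𝓜̂ 𝒬_k = (N^{(k+1)}, 0, 0, 0)ᵀ` hold for every `k ≥ 1`. -/
theorem matrix_recursion (n : ℕ) (d : ℝ) (G : SGraph n) :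
    ∀ k : ℤ, 1 ≤ k →
      bigM d G * bigQ d G k = bigQ d G (k + 1) ∧
      bigMhat d G * bigQ d G k =
        Matrix.of fun (p : Fin 4 × Fin n) (y : Fin n) =>
          if p.1 = 0 then Nmat d G (k.toNat + 1) p.2 y else 0 := by
  intro k hk
  have e1 : (k-1).toNat = k.toNat - 1 := by omega
  have e2 : (k+1).toNat = k.toNat + 1 := by omega
  have e3 : k.toNat - 1 + 2 = k.toNat + 1 := by omega
  have e4 : k + 1 - 1 = k := by omega
  have hm : 1 ≤ k.toNat := by omega
  constructor
  · ext ⟨i, u⟩ v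
    rw [Matrix.mul_apply, Fintype.sum_prod_type, Fin.sum_univ_four]
    fin_cases i
    · simp only [bigM, bigQ, Matrix.of_apply, Fin.zero_eta, Fin.isValue,
        Matrix.cons_val_zero, Matrix.cons_val_one, Matrix.head_cons,
        Matrix.cons_val_two, Matrix.tail_cons, Matrix.cons_val_three,
        Matrix.head_fin_const]
      rw [MyNB.T1 d G _ _ k (by omega), MyNB.T2 d G _ _ (k-1) (by omega),
        MyNB.T3 d G _ _ k (by omega), MyNB.T4 d G _ _ _ (k-1) (by omega),
        MyNB.Qmat_apply d G (k+1) (by omega), e1, e2]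
      have hrec := MyNB.Qe_rec d G (k.toNat - 1) (1 - d/n) u v
      rw [e3] at hrec
      have hcore := MyNB.core' d G u v k.toNat hm
      rw [hrec, hcore]
      ring
    · simp only [bigM, bigQ, Matrix.of_apply, Fin.mk_one, Fin.isValue,
        Matrix.cons_val_zero, Matrix.cons_val_one, Matrix.head_cons,
        Matrix.cons_val_two, Matrix.tail_cons, Matrix.cons_val_three,
        Matrix.head_fin_const]
      rw [MyNB.T5, MyNB.T6, MyNB.T6, MyNB.T6, e4]
      ring
    · simp only [bigM, bigQ, Matrix.of_apply, Fin.isValue,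
        Matrix.cons_val_zero, Matrix.cons_val_one, Matrix.head_cons,
        Matrix.cons_val_two, Matrix.tail_cons, Matrix.cons_val_three,
        Matrix.head_fin_const, show (⟨2, by omega⟩ : Fin 4) = 2 from rfl]
      rw [MyNB.T1 d G _ _ k (by omega), MyNB.T2d d G _ _ (k-1) (by omega),
        MyNB.T3 d G _ _ k (by omega), MyNB.T4 d G _ _ _ (k-1) (by omega),
        MyNB.Qmat_apply d G (k+1) (by omega), e1, e2]
      have hrec := MyNB.Qe_rec d G (k.toNat - 1) (-(d/n)) u v
      rw [e3] at hrec
      have hcore := MyNB.core' d G u v k.toNat hm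
      rw [hrec, hcore]
      ring
    · simp only [bigM, bigQ, Matrix.of_apply, Fin.isValue,
        Matrix.cons_val_zero, Matrix.cons_val_one, Matrix.head_cons,
        Matrix.cons_val_two, Matrix.tail_cons, Matrix.cons_val_three,
        Matrix.head_fin_const, show (⟨3, by omega⟩ : Fin 4) = 3 from rfl]
      rw [MyNB.T6, MyNB.T6, MyNB.T5, MyNB.T6, e4]
      ring
  · ext ⟨i, u⟩ v
    rw [Matrix.mul_apply, Fintype.sum_prod_type, Fin.sum_univ_four]
    fin_cases i
    · simp only [bigMhat, bigQ, Matrix.of_apply, Fin.zero_eta, Fin.isValue,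
        Matrix.cons_val_zero, Matrix.cons_val_one, Matrix.head_cons,
        Matrix.cons_val_two, Matrix.tail_cons, Matrix.cons_val_three,
        Matrix.head_fin_const, reduceIte]
      rw [MyNB.T1 d G _ _ k (by omega), MyNB.T2d d G _ _ (k-1) (by omega),
        MyNB.T3 d G _ _ k (by omega), MyNB.T4 d G _ _ _ (k-1) (by omega),
        e1, MyNB.Nmat_apply]
      have hcore := MyNB.core' d G u v k.toNat hm
      rw [hcore]
      ring
    · simp only [bigMhat, bigQ, Matrix.of_apply, Fin.mk_one, Fin.isValue,
        Matrix.cons_val_zero, Matrix.cons_val_one, Matrix.head_cons,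
        Matrix.cons_val_two, Matrix.tail_cons, Matrix.cons_val_three,
        Matrix.head_fin_const]
      rw [MyNB.T6, MyNB.T6, MyNB.T6, MyNB.T6]
      rw [if_neg (by decide)]
      ring
    · simp only [bigMhat, bigQ, Matrix.of_apply, Fin.isValue,
        Matrix.cons_val_zero, Matrix.cons_val_one, Matrix.head_cons,
        Matrix.cons_val_two, Matrix.tail_cons, Matrix.cons_val_three,
        Matrix.head_fin_const, show (⟨2, by omega⟩ : Fin 4) = 2 from rfl]
      rw [MyNB.T6, MyNB.T6, MyNB.T6, MyNB.T6]
      rw [if_neg (by decide)]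
      ring
    · simp only [bigMhat, bigQ, Matrix.of_apply, Fin.isValue,
        Matrix.cons_val_zero, Matrix.cons_val_one, Matrix.head_cons,
        Matrix.cons_val_two, Matrix.tail_cons, Matrix.cons_val_three,
        Matrix.head_fin_const, show (⟨3, by omega⟩ : Fin 4) = 3 from rfl]
      rw [MyNB.T6, MyNB.T6, MyNB.T6, MyNB.T6]
      rw [if_neg (by decide)]
      ring
end
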